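/- arXiv:1112.2303 — 4 statements merged into one kernel-verified Lean document; each statement's English description precedes it below -/
import Mathlib

section
/- In the ring of formal power series in q over the polynomial ring ℚ[z], the identity ∑_{n=1}^∞ z^n q^{n²} · (zq^{n+1};q)_∞ · ((q;q)_{n−1})^{−1} · (1+z q^n)^{−1} = ∑_{n=1}^∞ (−1)^{n−1} z^n q^{n(n+1)/2} · (∏_{j=1}^{n} (1+z q^j))^{−1} holds. -/
open PowerSeries

/-- The coefficientwise sum of a family of formal power series; it agrees with
the sum of the family whenever `coeff N (f n) = 0` for `n > N` (so that the
partial sums converge coefficientwise in the `q`-adic topology). -/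
noncomputable def seriesSum {R : Type*} [CommRing R] (f : ℕ → PowerSeries R) : PowerSeries R :=
  PowerSeries.mk fun N => ∑ n ∈ Finset.range (N + 1), PowerSeries.coeff N (f n)

/-- The coefficientwise infinite product of a family of formal power series;
it agrees with the product of the family whenever each factor `f k` is
`1 + (terms of order > k)` (so that the partial products converge
coefficientwise in the `q`-adic topology). -/
noncomputable def seriesProd {R : Type*} [CommRing R] (f : ℕ → PowerSeries R) : PowerSeries R :=
  PowerSeries.mk fun N => PowerSeries.coeff N (∏ k ∈ Finset.range (N + 1), f k)

/-- The series `z`: the coefficient variable of `ℚ[z]` viewed as a constant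
formal power series in `q`. -/
noncomputable def zz : PowerSeries (Polynomial ℚ) :=
  PowerSeries.C Polynomial.X


open Finset

variable {R : Type*} [CommRing R]

/-- `f` has order at least `t`. -/
def ordGe (f : PowerSeries R) (t : ℕ) : Prop := ∀ j < t, coeff j f = 0

lemma ordGe_mono {f : PowerSeries R} {s t : ℕ} (h : ordGe f t) (hs : s ≤ t) : ordGe f s :=
  fun j hj => h j (lt_of_lt_of_le hj hs)

lemma ordGe_zero (f : PowerSeries R) : ordGe f 0 := fun j hj => absurd hj (Nat.not_lt_zero j)

lemma ordGe_mul_left {f : PowerSeries R} {t : ℕ} (h : ordGe f t) (g : PowerSeries R) :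
    ordGe (f * g) t := by
  intro j hj
  rw [coeff_mul]
  refine Finset.sum_eq_zero fun p hp => ?_
  rw [Finset.HasAntidiagonal.mem_antidiagonal] at hp
  rw [h p.1 (lt_of_le_of_lt (hp ▸ Nat.le_add_right p.1 p.2) hj), zero_mul]

lemma ordGe_mul_right {g : PowerSeries R} {t : ℕ} (h : ordGe g t) (f : PowerSeries R) :
    ordGe (f * g) t := by
  rw [mul_comm]; exact ordGe_mul_left h f

lemma ordGe_mul {f g : PowerSeries R} {s t : ℕ} (hf : ordGe f s) (hg : ordGe g t) :
    ordGe (f * g) (s + t) := by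
  intro j hj
  rw [coeff_mul]
  refine Finset.sum_eq_zero fun p hp => ?_
  rw [Finset.HasAntidiagonal.mem_antidiagonal] at hp
  rcases lt_or_ge p.1 s with h1 | h1
  · rw [hf p.1 h1, zero_mul]
  · have : p.2 < t := by omega
    rw [hg p.2 this, mul_zero]

lemma ordGe_X_pow (e : ℕ) : ordGe ((X : PowerSeries R) ^ e) e := by
  intro j hj
  rw [coeff_X_pow, if_neg (by omega)]

lemma ordGe_add {f g : PowerSeries R} {t : ℕ} (hf : ordGe f t) (hg : ordGe g t) :
    ordGe (f + g) t := by
  intro j hj; rw [map_add, hf j hj, hg j hj, add_zero]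

lemma ordGe_neg {f : PowerSeries R} {t : ℕ} (hf : ordGe f t) : ordGe (-f) t := by
  intro j hj; rw [map_neg, hf j hj, neg_zero]

lemma ordGe_sub {f g : PowerSeries R} {t : ℕ} (hf : ordGe f t) (hg : ordGe g t) :
    ordGe (f - g) t := by
  rw [sub_eq_add_neg]; exact ordGe_add hf (ordGe_neg hg)

lemma coeff_seriesSum (f : ℕ → PowerSeries R) (N : ℕ) :
    coeff N (seriesSum f) = ∑ n ∈ Finset.range (N + 1), coeff N (f n) := by
  simp [seriesSum]

lemma seriesSum_congr {f g : ℕ → PowerSeries R} (h : ∀ n, f n = g n) :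
    seriesSum f = seriesSum g := by
  have : f = g := funext h
  rw [this]

lemma seriesSum_add (f g : ℕ → PowerSeries R) :
    seriesSum (fun n => f n + g n) = seriesSum f + seriesSum g := by
  ext N
  simp [coeff_seriesSum, Finset.sum_add_distrib]

lemma seriesSum_sub (f g : ℕ → PowerSeries R) :
    seriesSum (fun n => f n - g n) = seriesSum f - seriesSum g := by
  ext N
  simp [coeff_seriesSum, Finset.sum_sub_distrib]

lemma seriesSum_mul {f : ℕ → PowerSeries R} (h : ∀ n, ordGe (f n) n) (c : PowerSeries R) :
    c * seriesSum f = seriesSum (fun n => c * f n) := by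
  ext N
  rw [coeff_seriesSum, coeff_mul]
  have step : ∀ j, j ≤ N → coeff j (seriesSum f) = ∑ n ∈ Finset.range (N+1), coeff j (f n) := by
    intro j hj
    rw [coeff_seriesSum]
    refine Finset.sum_subset (by intro x hx; simp at hx ⊢; omega) ?_
    intro x hx hxn
    simp only [Finset.mem_range, not_lt] at hx hxn
    exact h x j (by omega)
  calc ∑ p ∈ Finset.HasAntidiagonal.antidiagonal N, coeff p.1 c * coeff p.2 (seriesSum f)
      = ∑ p ∈ Finset.HasAntidiagonal.antidiagonal N, ∑ n ∈ Finset.range (N+1), coeff p.1 c * coeff p.2 (f n) := by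
        refine Finset.sum_congr rfl fun p hp => ?_
        rw [Finset.HasAntidiagonal.mem_antidiagonal] at hp
        rw [step p.2 (by omega), Finset.mul_sum]
    _ = ∑ n ∈ Finset.range (N+1), coeff N (c * f n) := by
        rw [Finset.sum_comm]
        refine Finset.sum_congr rfl fun n _ => ?_
        rw [coeff_mul]

lemma seriesSum_shift {f : ℕ → PowerSeries R} (h : ∀ n, ordGe (f n) n) :
    seriesSum f = f 0 + seriesSum (fun n => f (n + 1)) := by
  ext N
  rw [map_add, coeff_seriesSum, coeff_seriesSum]
  rw [Finset.sum_range_succ' (fun n => coeff N (f n)) N]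
  rw [Finset.sum_range_succ]
  rw [h (N+1) N (Nat.lt_succ_self N), add_zero, add_comm]

lemma seriesSum_telescope {f : ℕ → PowerSeries R} (h : ∀ n, ordGe (f n) n) :
    seriesSum (fun n => f n - f (n + 1)) = f 0 := by
  ext N
  rw [coeff_seriesSum]
  have : ∀ n, coeff N (f n - f (n+1)) = coeff N (f n) - coeff N (f (n+1)) := by
    intro n; rw [map_sub]
  simp only [this]
  rw [Finset.sum_range_sub' (fun n => coeff N (f n)) (N+1)]
  rw [h (N+1) N (Nat.lt_succ_self N), sub_zero]

lemma ordGe_seriesSum {f : ℕ → PowerSeries R} {t : ℕ} (h : ∀ n, ordGe (f n) t) :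
    ordGe (seriesSum f) t := by
  intro j hj
  rw [coeff_seriesSum]
  exact Finset.sum_eq_zero fun n _ => h n j hj

lemma coeff_seriesProd (f : ℕ → PowerSeries R) (N : ℕ) :
    coeff N (seriesProd f) = coeff N (∏ k ∈ Finset.range (N + 1), f k) := by
  simp [seriesProd]

lemma ordGe_prod_sub_one {ι : Type*} (s : Finset ι) (f : ι → PowerSeries R) {t : ℕ}
    (h : ∀ i ∈ s, ordGe (f i - 1) t) : ordGe ((∏ i ∈ s, f i) - 1) t := by
  classical
  induction s using Finset.induction_on with
  | empty => intro j hj; simp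
  | @insert a s ha ih =>
      have h1 : ordGe (f a - 1) t := h a (Finset.mem_insert_self a s)
      have h2 : ordGe ((∏ i ∈ s, f i) - 1) t := ih fun i hi => h i (Finset.mem_insert_of_mem hi)
      rw [Finset.prod_insert ha]
      have : f a * ∏ i ∈ s, f i - 1
          = (f a - 1) * ∏ i ∈ s, f i + ((∏ i ∈ s, f i) - 1) := by ring
      rw [this]
      exact ordGe_add (ordGe_mul_left h1 _) h2

lemma coeff_prod_stable {f : ℕ → PowerSeries R} {N M₀ : ℕ}
    (h : ∀ k, M₀ ≤ k → ordGe (f k - 1) (N + 1)) :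
    ∀ M, M₀ ≤ M → coeff N (∏ k ∈ Finset.range M, f k) = coeff N (∏ k ∈ Finset.range M₀, f k) := by
  intro M hM
  induction M with
  | zero => have : M₀ = 0 := Nat.le_zero.mp hM; rw [this]
  | succ M ih =>
      rcases Nat.lt_or_ge M₀ (M+1) with hlt | hge
      · have hM' : M₀ ≤ M := by omega
        rw [Finset.prod_range_succ]
        have : (∏ k ∈ Finset.range M, f k) * f M
            = (∏ k ∈ Finset.range M, f k) + (∏ k ∈ Finset.range M, f k) * (f M - 1) := by ring
        rw [this, map_add, ordGe_mul_right (h M hM') _ N (Nat.lt_succ_self N), add_zero]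
        exact ih hM'
      · have : M₀ = M + 1 := by omega
        rw [this]

/-- coefficient of the infinite product equals any sufficiently long partial product -/
lemma coeff_seriesProd_eq {f : ℕ → PowerSeries R} (hf : ∀ k, ordGe (f k - 1) (k + 1))
    {N M : ℕ} (hM : N + 1 ≤ M) :
    coeff N (seriesProd f) = coeff N (∏ k ∈ Finset.range M, f k) := by
  rw [coeff_seriesProd]
  exact (coeff_prod_stable (M₀ := N+1) (fun k hk => ordGe_mono (hf k) (by omega)) M hM).symm

lemma seriesProd_peel {f : ℕ → PowerSeries R} (hf : ∀ k, ordGe (f k - 1) (k + 1)) :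
    seriesProd f = f 0 * seriesProd (fun k => f (k + 1)) := by
  ext N
  have hg : ∀ k, ordGe ((fun k => f (k+1)) k - 1) (k + 1) := by
    intro k; exact ordGe_mono (hf (k+1)) (by omega)
  have e1 : coeff N (seriesProd f) = coeff N (∏ k ∈ Finset.range (N+2), f k) :=
    coeff_seriesProd_eq hf (by omega)
  have e2 : (∏ k ∈ Finset.range (N+2), f k) = f 0 * ∏ k ∈ Finset.range (N+1), f (k+1) := by
    rw [Finset.prod_range_succ']; ring
  rw [e1, e2, coeff_mul, coeff_mul]
  refine Finset.sum_congr rfl fun p hp => ?_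
  rw [Finset.HasAntidiagonal.mem_antidiagonal] at hp
  congr 1
  exact (coeff_seriesProd_eq hg (by omega : p.2 + 1 ≤ N + 1)).symm

lemma ordGe_seriesProd_sub_one {f : ℕ → PowerSeries R} (hf : ∀ k, ordGe (f k - 1) (k + 1))
    {t : ℕ} (h : ∀ k, ordGe (f k - 1) t) : ordGe (seriesProd f - 1) t := by
  intro j hj
  rw [map_sub, coeff_seriesProd]
  have := ordGe_prod_sub_one (Finset.range (j+1)) f (fun i _ => h i) j hj
  rw [map_sub] at this
  exact this


-- Part 1: concrete series and unit lemmas (appended to part0)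
abbrev S := PowerSeries (Polynomial ℚ)

noncomputable def Aa (j : ℕ) : S := 1 + zz * X ^ j
noncomputable def Qd (n : ℕ) : S := ∏ k ∈ Finset.range n, (1 - (X : S) ^ (k+1))
noncomputable def QQ (m k : ℕ) : S := ∏ i ∈ Finset.range k, (1 - (X : S) ^ (m+1+i))
noncomputable def Pinf (m : ℕ) : S := seriesProd (fun k => 1 - zz * X ^ (m+k))

lemma Qd_zero : Qd 0 = 1 := by simp [Qd]
lemma Qd_succ (n : ℕ) : Qd (n+1) = Qd n * (1 - X ^ (n+1)) := Finset.prod_range_succ _ n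
lemma QQ_zero (m : ℕ) : QQ m 0 = 1 := by simp [QQ]
lemma QQ_succ (m k : ℕ) : QQ m (k+1) = QQ m k * (1 - X ^ (m+1+k)) := Finset.prod_range_succ _ k
lemma QQ_peel (m k : ℕ) : QQ m (k+1) = (1 - X ^ (m+1)) * QQ (m+1) k := by
  rw [QQ, Finset.prod_range_succ']
  rw [mul_comm]
  congr 1
  · apply Finset.prod_congr rfl
    intro i _
    congr 2
    omega
lemma QQ_zero_eq_Qd (k : ℕ) : QQ 0 k = Qd k := by
  apply Finset.prod_congr rfl
  intro i _
  congr 2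
  omega

lemma ordGe_one_sub_X_sub_one (e : ℕ) (he : 1 ≤ e) (t : ℕ) (ht : t ≤ e) :
    ordGe ((1 - (X : S) ^ e) - 1) t := by
  have : (1 - (X : S) ^ e) - 1 = -(X ^ e) := by ring
  rw [this]
  exact ordGe_neg (ordGe_mono (ordGe_X_pow e) ht)

lemma ordGe_one_sub_zX_sub_one (e : ℕ) (t : ℕ) (ht : t ≤ e) :
    ordGe ((1 - zz * (X : S) ^ e) - 1) t := by
  have : (1 - zz * (X : S) ^ e) - 1 = -(zz * X ^ e) := by ring
  rw [this]
  exact ordGe_neg (ordGe_mono (ordGe_mul_right (ordGe_X_pow e) zz) ht)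

lemma Pinf_hyp (m : ℕ) (hm : 1 ≤ m) :
    ∀ k, ordGe ((fun k => 1 - zz * (X:S) ^ (m+k)) k - 1) (k + 1) := by
  intro k
  exact ordGe_one_sub_zX_sub_one (m+k) (k+1) (by omega)

lemma Pinf_peel (m : ℕ) (hm : 1 ≤ m) : Pinf m = (1 - zz * X ^ m) * Pinf (m+1) := by
  rw [Pinf, seriesProd_peel (Pinf_hyp m hm)]
  refine congrArg₂ (· * ·) rfl ?_
  rw [Pinf]
  apply congrArg seriesProd
  funext k
  have h : (m + (k+1) : ℕ) = m+1+k := by omega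
  rw [h]

lemma ordGe_Pinf_sub_one (m : ℕ) (hm : 1 ≤ m) : ordGe (Pinf m - 1) m :=
  ordGe_seriesProd_sub_one (Pinf_hyp m hm)
    (fun k => ordGe_one_sub_zX_sub_one (m+k) m (by omega))

-- units
lemma isUnit_one_add {g : S} (h : ordGe g 1) : IsUnit (1 + g) := by
  rw [PowerSeries.isUnit_iff_constantCoeff]
  have h0 := h 0 Nat.one_pos
  rw [← coeff_zero_eq_constantCoeff] at *
  rw [map_add, h0, add_zero]
  simp

lemma isUnit_Aa (j : ℕ) (hj : 1 ≤ j) : IsUnit (Aa j) :=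
  isUnit_one_add (ordGe_mono (ordGe_mul_right (ordGe_X_pow j) zz) hj)

lemma isUnit_one_sub_X (e : ℕ) (he : 1 ≤ e) : IsUnit (1 - (X : S) ^ e) := by
  have : (1 - (X : S) ^ e) = 1 + (-(X ^ e)) := by ring
  rw [this]
  exact isUnit_one_add (ordGe_neg (ordGe_mono (ordGe_X_pow e) he))

lemma isUnit_Qd (n : ℕ) : IsUnit (Qd n) := by
  rw [Qd]
  apply Finset.prod_induction _ IsUnit (fun a b ha hb => ha.mul hb) isUnit_one
  intro k _
  exact isUnit_one_sub_X (k+1) (by omega)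

lemma isUnit_QQ (m k : ℕ) : IsUnit (QQ m k) := by
  rw [QQ]
  apply Finset.prod_induction _ IsUnit (fun a b ha hb => ha.mul hb) isUnit_one
  intro i _
  exact isUnit_one_sub_X (m+1+i) (by omega)

-- inverse helpers
lemma unit_cancel {u a b : S} (hu : IsUnit u) (h : u * a = u * b) : a = b :=
  hu.mul_left_cancel h

lemma mulInvSelf {u : S} (hu : IsUnit u) : u * Ring.inverse u = 1 :=
  Ring.mul_inverse_cancel u hu

lemma inv_mul_split (u v : S) : Ring.inverse (u * v) = Ring.inverse u * Ring.inverse v := by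
  rw [Ring.mul_inverse_rev, mul_comm]

lemma mulInvMulCancel {u : S} (v : S) (hu : IsUnit u) :
    u * Ring.inverse (u * v) = Ring.inverse v := by
  rw [inv_mul_split, ← mul_assoc, mulInvSelf hu, one_mul]
-- Part 2 : Euler's theorem  Pinf t * Eut t = 1
noncomputable def Eut (t : ℕ) : S := seriesSum (fun k => zz^k * X^(t*k) * Ring.inverse (Qd k))

lemma ordGe_Eut_term (t k : ℕ) : ordGe (zz^k * X^(t*k) * Ring.inverse (Qd k)) (t*k) :=
  ordGe_mul_left (ordGe_mul_right (ordGe_X_pow (t*k)) _) _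

lemma ordGe_Eut_term' (t : ℕ) (ht : 1 ≤ t) :
    ∀ k, ordGe (zz^k * X^(t*k) * Ring.inverse (Qd k)) k :=
  fun k => ordGe_mono (ordGe_Eut_term t k) (by nlinarith)

lemma Eut_rec (t : ℕ) (ht : 1 ≤ t) : Eut (t+1) = (1 - zz * X^t) * Eut t := by
  set h : ℕ → S := fun k => zz^k * X^(t*k) * (1 - X^k) * Ring.inverse (Qd k) with hh
  have hordh : ∀ k, ordGe (h k) k := by
    intro k
    exact ordGe_mul_left (ordGe_mul_left (ordGe_mul_right
      (ordGe_mono (ordGe_X_pow (t*k)) (by nlinarith)) _) _) _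
  have claim1 : Eut t - Eut (t+1) = seriesSum h := by
    rw [Eut, Eut, ← seriesSum_sub]
    apply seriesSum_congr
    intro k
    simp only [hh]
    ring
  have claim3 : ∀ k, h (k+1) = zz * X^t * (zz^k * X^(t*k) * Ring.inverse (Qd k)) := by
    intro k
    simp only [hh]
    rw [Qd_succ, inv_mul_split]
    have hc := mulInvSelf (isUnit_one_sub_X (k+1) (by omega))
    linear_combination (zz^(k+1) * X^(t*(k+1)) * Ring.inverse (Qd k)) * hc
  have claim2 : seriesSum h = zz * X^t * Eut t := by
    rw [seriesSum_shift hordh]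
    have h0 : h 0 = 0 := by simp [hh]
    rw [h0, zero_add, Eut, seriesSum_mul (ordGe_Eut_term' t ht) (zz * X^t)]
    exact seriesSum_congr claim3
  have key := claim1.trans claim2
  linear_combination -key

lemma ordGe_Eut_sub_one (t : ℕ) (ht : 1 ≤ t) : ordGe (Eut t - 1) t := by
  rw [Eut, seriesSum_shift (ordGe_Eut_term' t ht)]
  have h0 : (zz^0 * X^(t*0) * Ring.inverse (Qd 0) : S) = 1 := by
    simp [Qd_zero, Ring.inverse_one]
  rw [h0]
  rw [add_comm, add_sub_assoc, sub_self, add_zero]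
  apply ordGe_seriesSum
  intro n
  exact ordGe_mono (ordGe_Eut_term t (n+1)) (by nlinarith)

lemma euler_chain (t : ℕ) (ht : 1 ≤ t) : ∀ j, Pinf t * Eut t = Pinf (t+j) * Eut (t+j) := by
  intro j
  induction j with
  | zero => rfl
  | succ j ih =>
      rw [ih, Pinf_peel (t+j) (by omega)]
      have hr := Eut_rec (t+j) (by omega)
      have e1 : (t+j+1 : ℕ) = t + (j+1) := by omega
      rw [← e1, hr]
      ring

theorem euler (t : ℕ) (ht : 1 ≤ t) : Pinf t * Eut t = 1 := by
  refine PowerSeries.ext fun N => ?_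
  rw [euler_chain t ht (N+1)]
  set T := t + (N+1) with hT
  have hT1 : 1 ≤ T := by omega
  have hsub : Pinf T * Eut T - 1 = (Pinf T - 1) * Eut T + (Eut T - 1) := by ring
  have hord : ordGe (Pinf T * Eut T - 1) (N+1) := by
    rw [hsub]
    exact ordGe_add
      (ordGe_mul_left (ordGe_mono (ordGe_Pinf_sub_one T hT1) (by omega)) _)
      (ordGe_mono (ordGe_Eut_sub_one T hT1) (by omega))
  have := hord N (Nat.lt_succ_self N)
  rw [map_sub] at this
  exact sub_eq_zero.mp this
-- Part 3 : Durfee square identity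
noncomputable def Dt (s m : ℕ) : S := zz^m * X^(m*m+s*m) * Pinf (m+s+1) * Ring.inverse (Qd m)
noncomputable def St (s m : ℕ) : S :=
  seriesSum (fun j => zz^(j+1) * X^((j+1)*(m+1)+s*(j+1)) * Ring.inverse (QQ m (j+1)))
noncomputable def Stt (s m : ℕ) : S :=
  seriesSum (fun j => zz^j * X^(j*(m+s+1)) * Ring.inverse (QQ (m+1) j))
noncomputable def Bt (s m : ℕ) : S := 1 + X^m * St s m
noncomputable def Et (s m : ℕ) : S :=
  zz^m * X^(m*m+s*m) * Pinf (m+s+1) * Bt s m * Ring.inverse (Qd m)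

lemma ordGe_Stt_term (s m : ℕ) : ∀ j, ordGe (zz^j * X^(j*(m+s+1)) * Ring.inverse (QQ (m+1) j)) j :=
  fun j => ordGe_mono (ordGe_mul_left (ordGe_mul_right (ordGe_X_pow _) _) _) (by nlinarith)

lemma ordGe_St_term (s m : ℕ) :
    ∀ j, ordGe (zz^(j+1) * X^((j+1)*(m+1)+s*(j+1)) * Ring.inverse (QQ m (j+1))) j :=
  fun j => ordGe_mono (ordGe_mul_left (ordGe_mul_right (ordGe_X_pow _) _) _) (by nlinarith)

lemma D2c (s m : ℕ) : (1 - zz * X^(m+s+1)) * Stt s m = 1 + X^(m+1) * St s (m+1) := by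
  set f : ℕ → S := fun j => zz^(j+1) * X^((j+1)*(m+s+1)) * Ring.inverse (QQ (m+1) (j+1)) with hf
  set g : ℕ → S := fun j => zz^(j+1) * X^((j+1)*(m+s+1)) * Ring.inverse (QQ (m+1) j) with hg
  have step1 : Stt s m = 1 + seriesSum f := by
    rw [Stt, seriesSum_shift (ordGe_Stt_term s m)]
    have h0 : (zz^0 * X^(0*(m+s+1)) * Ring.inverse (QQ (m+1) 0) : S) = 1 := by
      simp [QQ_zero, Ring.inverse_one]
    rw [h0]
  have step2 : zz * X^(m+s+1) * Stt s m = seriesSum g := by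
    rw [Stt, seriesSum_mul (ordGe_Stt_term s m)]
    apply seriesSum_congr
    intro j
    simp only [hg]
    ring
  have step3 : ∀ j, f j - g j
      = X^(m+1) * (zz^(j+1) * X^((j+1)*(m+1+1)+s*(j+1)) * Ring.inverse (QQ (m+1) (j+1))) := by
    intro j
    have e : QQ (m+1) (j+1) = QQ (m+1) j * (1 - X^(m+2+j)) := QQ_succ (m+1) j
    have hw := mulInvSelf (isUnit_one_sub_X (m+2+j) (by omega))
    simp only [hf, hg]
    rw [e, inv_mul_split]
    linear_combination (zz^(j+1) * X^((j+1)*(m+s+1)) * Ring.inverse (QQ (m+1) j)) * hw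
  have step4 : X^(m+1) * St s (m+1) = seriesSum (fun j => f j - g j) := by
    rw [St, seriesSum_mul (ordGe_St_term s (m+1))]
    apply seriesSum_congr
    intro j
    rw [step3 j]
  have expand : (1 - zz * X^(m+s+1)) * Stt s m = Stt s m - zz * X^(m+s+1) * Stt s m := by
    ring
  rw [expand, step2, step1, step4, seriesSum_sub]
  ring

lemma D2b (s m : ℕ) :
    Pinf (m+s+1) * Stt s m = Pinf (m+s+2) * (1 + X^(m+1) * St s (m+1)) := by
  rw [Pinf_peel (m+s+1) (by omega)]
  have e : (m+s+1+1 : ℕ) = m+s+2 := by omega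
  rw [e, mul_comm (1 - zz * X^(m+s+1)) (Pinf (m+s+2)), mul_assoc, D2c]

lemma StInv (s m : ℕ) :
    X^m * St s m * Ring.inverse (Qd m)
      = zz * X^(2*m+s+1) * Stt s m * Ring.inverse (Qd (m+1)) := by
  have lhs : X^m * St s m * Ring.inverse (Qd m) = (X^m * Ring.inverse (Qd m)) * St s m := by ring
  have rhs : zz * X^(2*m+s+1) * Stt s m * Ring.inverse (Qd (m+1))
      = (zz * X^(2*m+s+1) * Ring.inverse (Qd (m+1))) * Stt s m := by ring
  rw [lhs, rhs, St, Stt, seriesSum_mul (ordGe_St_term s m), seriesSum_mul (ordGe_Stt_term s m)]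
  apply seriesSum_congr
  intro j
  rw [QQ_peel, inv_mul_split, Qd_succ, inv_mul_split]
  ring

lemma ordGe_Et (s m : ℕ) (hs : 1 ≤ s) : ordGe (Et s m) m := by
  rw [Et]
  exact ordGe_mono (ordGe_mul_left (ordGe_mul_left (ordGe_mul_left
    (ordGe_mul_right (ordGe_X_pow _) _) _) _) _) (by nlinarith)

lemma Et_step (s m : ℕ) : Et s m - Et s (m+1) = Dt s m := by
  have h1 : Et s m - Dt s m
      = zz^m * X^(m*m+s*m) * Pinf (m+s+1) * (X^m * St s m * Ring.inverse (Qd m)) := by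
    rw [Et, Dt, Bt]
    ring
  rw [StInv] at h1
  have h2 : zz^m * X^(m*m+s*m) * Pinf (m+s+1)
        * (zz * X^(2*m+s+1) * Stt s m * Ring.inverse (Qd (m+1)))
      = zz^(m+1) * X^((m+1)*(m+1)+s*(m+1)) * (Pinf (m+s+1) * Stt s m)
        * Ring.inverse (Qd (m+1)) := by ring
  rw [h2, D2b] at h1
  have h3 : Et s (m+1) = zz^(m+1) * X^((m+1)*(m+1)+s*(m+1))
      * (Pinf (m+s+2) * (1 + X^(m+1) * St s (m+1))) * Ring.inverse (Qd (m+1)) := by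
    rw [Et, Bt]
    have e : (m+1+s+1 : ℕ) = m+s+2 := by omega
    rw [e]
    ring
  rw [← h3] at h1
  linear_combination h1

lemma Et_zero (s : ℕ) (hs : 1 ≤ s) : Et s 0 = 1 := by
  have key : Bt s 0 = Eut (s+1) := by
    rw [Bt, Eut, seriesSum_shift (ordGe_Eut_term' (s+1) (by omega))]
    have h0 : (zz^0 * X^((s+1)*0) * Ring.inverse (Qd 0) : S) = 1 := by
      simp [Qd_zero, Ring.inverse_one]
    rw [h0, pow_zero, one_mul, St]
    refine congrArg₂ (· + ·) rfl ?_
    apply seriesSum_congr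
    intro j
    rw [QQ_zero_eq_Qd]
    have e : ((j+1)*(0+1)+s*(j+1) : ℕ) = (s+1)*(j+1) := by ring
    rw [e]
  rw [Et, key, Qd_zero, Ring.inverse_one]
  have e : (0+s+1 : ℕ) = s+1 := by omega
  rw [e]
  simpa using euler (s+1) (by omega)

theorem durfee (s : ℕ) (hs : 1 ≤ s) : seriesSum (fun m => Dt s m) = 1 := by
  have h : seriesSum (fun m => Dt s m) = seriesSum (fun m => Et s m - Et s (m+1)) :=
    seriesSum_congr (fun m => (Et_step s m).symm)
  rw [h, seriesSum_telescope (fun m => ordGe_Et s m hs), Et_zero s hs]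
-- Part 4 : the two functional equations and the main theorem
noncomputable def Lt (r m : ℕ) : S :=
  zz^(m+1) * X^((m+1)*(m+1) + r*(m+1)) * Pinf (m+2+r) * Ring.inverse (Qd m)
    * Ring.inverse (Aa (m+1+r))
noncomputable def prodA (r n : ℕ) : S := ∏ j ∈ Finset.range n, Aa (j+1+r)
noncomputable def Rt (r m : ℕ) : S :=
  (-1 : S)^m * zz^(m+1) * X^((m+1)*(m+2)/2 + r*(m+1)) * Ring.inverse (prodA r (m+1))
noncomputable def Gs (r : ℕ) : S := seriesSum (Lt r)
noncomputable def Hs (r : ℕ) : S := seriesSum (Rt r)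
noncomputable def Nt (r m : ℕ) : S :=
  zz^(m+1) * X^((m+1)*m + r*(m+1) + 1) * Pinf (m+2+r) * Ring.inverse (Qd m)
noncomputable def Pst (r m : ℕ) : S :=
  zz^(m+1) * X^((m+1)*m + r*(m+1) + 1) * (1 - X^m) * Pinf (m+2+r) * Ring.inverse (Qd m)
    * Ring.inverse (Aa (m+1+r))

lemma ordGe_Lt (r : ℕ) : ∀ m, ordGe (Lt r m) (m+1) := by
  intro m
  rw [Lt]
  exact ordGe_mono (ordGe_mul_left (ordGe_mul_left (ordGe_mul_left
    (ordGe_mul_right (ordGe_X_pow _) _) _) _) _) (by nlinarith)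

lemma ordGe_Rt (r : ℕ) : ∀ m, ordGe (Rt r m) (m+1) := by
  intro m
  rw [Rt]
  have h2 : (m+1) ≤ (m+1)*(m+2)/2 + r*(m+1) := by
    have : (m+1) ≤ (m+1)*(m+2)/2 := by
      rw [Nat.le_div_iff_mul_le (by norm_num : 0 < 2)]
      nlinarith
    omega
  exact ordGe_mono (ordGe_mul_left (ordGe_mul_right (ordGe_X_pow _) _) _) h2

lemma ordGe_Nt (r : ℕ) : ∀ m, ordGe (Nt r m) (m+1) := by
  intro m
  rw [Nt]
  exact ordGe_mono (ordGe_mul_left (ordGe_mul_left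
    (ordGe_mul_right (ordGe_X_pow _) _) _) _) (by nlinarith)

lemma ordGe_Pst (r : ℕ) : ∀ m, ordGe (Pst r m) (m+1) := by
  intro m
  rw [Pst]
  exact ordGe_mono (ordGe_mul_left (ordGe_mul_left (ordGe_mul_left  (ordGe_mul_left
    (ordGe_mul_right (ordGe_X_pow _) _) _) _) _) _) (by nlinarith)

lemma ordGe_Dt (s : ℕ) (hs : 1 ≤ s) : ∀ m, ordGe (Dt s m) m := by
  intro m
  rw [Dt]
  exact ordGe_mono (ordGe_mul_left (ordGe_mul_left
    (ordGe_mul_right (ordGe_X_pow _) _) _) _) (by nlinarith)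

lemma claimB1 (r m : ℕ) : Aa (r+1) * Lt r m = Nt r m - Pst r m := by
  have hu := mulInvSelf (isUnit_Aa (m+1+r) (by omega))
  simp only [Lt, Nt, Pst, Aa] at *
  linear_combination (zz^(m+1) * X^((m+1)*m + r*(m+1) + 1) * Pinf (m+2+r)
    * Ring.inverse (Qd m)) * hu

lemma claimB2 (r m : ℕ) : Pst r (m+1) = zz * X^(r+1) * Lt (r+1) m := by
  have e1 : (m+2+(r+1) : ℕ) = m+1+2+r := by omega
  have e2 : (m+1+(r+1) : ℕ) = m+1+1+r := by omega
  rw [Pst, Lt, e1, e2, Qd_succ, inv_mul_split]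
  have hw := mulInvSelf (isUnit_one_sub_X (m+1) (by omega))
  linear_combination (zz^(m+1+1) * X^((m+1+1)*(m+1) + r*(m+1+1) + 1) * Pinf (m+1+2+r)
    * Ring.inverse (Qd m) * Ring.inverse (Aa (m+1+1+r))) * hw

lemma claimB3 (r : ℕ) : Pst r 0 = 0 := by
  simp [Pst]

lemma claimB4 (r : ℕ) : seriesSum (Nt r) = zz * X^(r+1) := by
  have h : ∀ m, Nt r m = zz * X^(r+1) * Dt (r+1) m := by
    intro m
    rw [Nt, Dt]
    have e : (m+(r+1)+1 : ℕ) = m+2+r := by omega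
    rw [e]
    ring
  rw [seriesSum_congr h, ← seriesSum_mul (ordGe_Dt (r+1) (by omega)),
    durfee (r+1) (by omega), mul_one]

lemma FE_G (r : ℕ) : Aa (r+1) * Gs r + zz * X^(r+1) * Gs (r+1) = zz * X^(r+1) := by
  have h1 : Aa (r+1) * Gs r = seriesSum (Nt r) - seriesSum (Pst r) := by
    rw [Gs, seriesSum_mul (fun m => ordGe_mono (ordGe_Lt r m) (by omega)),
      seriesSum_congr (claimB1 r), seriesSum_sub]
  have h2 : zz * X^(r+1) * Gs (r+1) = seriesSum (fun m => Pst r (m+1)) := by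
    rw [Gs, seriesSum_mul (fun m => ordGe_mono (ordGe_Lt (r+1) m) (by omega))]
    exact seriesSum_congr (fun m => (claimB2 r m).symm)
  have h3 : seriesSum (Pst r) = seriesSum (fun m => Pst r (m+1)) := by
    rw [seriesSum_shift (fun m => ordGe_mono (ordGe_Pst r m) (by omega)), claimB3, zero_add]
  rw [h1, h2, ← h3, claimB4]
  ring

lemma prodA_one (r : ℕ) : prodA r 1 = Aa (r+1) := by
  rw [prodA, Finset.prod_range_one]
  have e : (0+1+r : ℕ) = r+1 := by omega
  rw [e]

lemma prodA_peel (r m : ℕ) : prodA r (m+1+1) = Aa (r+1) * prodA (r+1) (m+1) := by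
  rw [prodA, Finset.prod_range_succ', mul_comm]
  have e0 : (0+1+r : ℕ) = r+1 := by omega
  rw [e0]
  refine congrArg₂ (· * ·) rfl ?_
  rw [prodA]
  apply Finset.prod_congr rfl
  intro j _
  have e : (j+1+1+r : ℕ) = j+1+(r+1) := by omega
  rw [e]

lemma hR0 (r : ℕ) : Aa (r+1) * Rt r 0 = zz * X^(r+1) := by
  have e2 : ((0+1)*(0+2)/2 + r*(0+1) : ℕ) = r+1 := by norm_num; omega
  rw [Rt, prodA_one, e2]
  have hu := mulInvSelf (isUnit_Aa (r+1) (by omega))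
  linear_combination (zz * X^(r+1)) * hu

lemma hRs (r m : ℕ) : Aa (r+1) * Rt r (m+1) = -(zz * X^(r+1)) * Rt (r+1) m := by
  have t1 : ((m+1+1)*(m+1+2)/2 : ℕ) = (m+1)*(m+2)/2 + (m+2) := by
    have h : ((m+1+1)*(m+1+2) : ℕ) = (m+1)*(m+2) + 2*(m+2) := by ring
    rw [h, Nat.add_mul_div_left _ _ (by norm_num : 0 < 2)]
  have eE : ((m+1+1)*(m+1+2)/2 + r*(m+1+1) : ℕ)
      = ((m+1)*(m+2)/2 + (r+1)*(m+1)) + (r+1) := by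
    rw [t1]
    ring
  rw [Rt, Rt, prodA_peel, inv_mul_split, eE, pow_add]
  have hu := mulInvSelf (isUnit_Aa (r+1) (by omega))
  have e3 : ((m+1)*(m+1+1)/2 : ℕ) = (m+1)*(m+2)/2 := by norm_num
  rw [e3] at *
  linear_combination ((-1:S)^(m+1) * zz^(m+1+1) * X^((m+1)*(m+2)/2 + (r+1)*(m+1)) * X^(r+1)
    * Ring.inverse (prodA (r+1) (m+1))) * hu

lemma FE_H (r : ℕ) : Aa (r+1) * Hs r + zz * X^(r+1) * Hs (r+1) = zz * X^(r+1) := by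
  have h1 : Aa (r+1) * Hs r = seriesSum (fun m => Aa (r+1) * Rt r m) := by
    rw [Hs, seriesSum_mul (fun m => ordGe_mono (ordGe_Rt r m) (by omega))]
  have h2 : seriesSum (fun m => Aa (r+1) * Rt r m)
      = Aa (r+1) * Rt r 0 + seriesSum (fun m => Aa (r+1) * Rt r (m+1)) := by
    apply seriesSum_shift
    intro m
    exact ordGe_mul_right (ordGe_mono (ordGe_Rt r m) (by omega)) _
  have h3 : seriesSum (fun m => Aa (r+1) * Rt r (m+1))
      = -(zz * X^(r+1)) * Hs (r+1) := by
    rw [Hs, seriesSum_mul (fun m => ordGe_mono (ordGe_Rt (r+1) m) (by omega))]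
    exact seriesSum_congr (fun m => hRs r m)
  rw [h1, h2, h3, hR0]
  ring

lemma FE_step (r : ℕ) :
    Gs r - Hs r = (-(zz * X^(r+1)) * Ring.inverse (Aa (r+1))) * (Gs (r+1) - Hs (r+1)) := by
  have h : Aa (r+1) * (Gs r - Hs r) = -(zz * X^(r+1)) * (Gs (r+1) - Hs (r+1)) := by
    linear_combination FE_G r - FE_H r
  have h1 : Ring.inverse (Aa (r+1)) * Aa (r+1) = 1 := by
    rw [mul_comm]
    exact mulInvSelf (isUnit_Aa (r+1) (by omega))
  linear_combination Ring.inverse (Aa (r+1)) * h - (Gs r - Hs r) * h1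

lemma FE_iter : ∀ k r, ∃ c : S, ordGe c k ∧ Gs r - Hs r = c * (Gs (r+k) - Hs (r+k)) := by
  intro k
  induction k with
  | zero => intro r; exact ⟨1, ordGe_zero 1, by rw [Nat.add_zero, one_mul]⟩
  | succ k ih =>
      intro r
      obtain ⟨c, hc, he⟩ := ih (r+1)
      refine ⟨(-(zz * X^(r+1)) * Ring.inverse (Aa (r+1))) * c, ?_, ?_⟩
      · have h1 : ordGe (-(zz * X^(r+1)) * Ring.inverse (Aa (r+1))) 1 :=
          ordGe_mul_left (ordGe_neg (ordGe_mul_right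
            (ordGe_mono (ordGe_X_pow (r+1)) (by omega)) _)) _
        have := ordGe_mul h1 hc
        exact ordGe_mono this (by omega)
      · have e : (r+1+k : ℕ) = r+(k+1) := by omega
        rw [FE_step r, he, e]
        ring

theorem G_eq_H : Gs 0 = Hs 0 := by
  have key : ∀ N, coeff N (Gs 0 - Hs 0) = 0 := by
    intro N
    obtain ⟨c, hc, he⟩ := FE_iter (N+1) 0
    rw [he]
    exact ordGe_mul_left hc _ N (Nat.lt_succ_self N)
  refine PowerSeries.ext fun N => ?_
  have := key N
  rw [map_sub] at this
  exact sub_eq_zero.mp this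

/-- Identity (2.3). -/
theorem stmt3 :
    seriesSum (fun m =>
      zz ^ (m + 1) * (X : PowerSeries (Polynomial ℚ)) ^ ((m + 1) ^ 2)
        * seriesProd (fun k => 1 - zz * X ^ (m + 1 + 1 + k))
        * Ring.inverse (∏ k ∈ Finset.range (m + 1 - 1), (1 - (X : PowerSeries (Polynomial ℚ)) ^ (k + 1)))
        * Ring.inverse (1 + zz * X ^ (m + 1))) =
    seriesSum (fun m =>
      (-1 : PowerSeries (Polynomial ℚ)) ^ (m + 1 - 1) * zz ^ (m + 1)
        * X ^ ((m + 1) * (m + 1 + 1) / 2)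
        * Ring.inverse (∏ j ∈ Finset.range (m + 1), (1 + zz * X ^ (j + 1)))) := by
  have step1 : seriesSum (fun m =>
      zz ^ (m + 1) * (X : PowerSeries (Polynomial ℚ)) ^ ((m + 1) ^ 2)
        * seriesProd (fun k => 1 - zz * X ^ (m + 1 + 1 + k))
        * Ring.inverse (∏ k ∈ Finset.range (m + 1 - 1), (1 - (X : PowerSeries (Polynomial ℚ)) ^ (k + 1)))
        * Ring.inverse (1 + zz * X ^ (m + 1))) = Gs 0 := by
    rw [Gs]
    apply seriesSum_congr
    intro m
    rw [Lt]
    have e1 : ((m+1)*(m+1) + 0*(m+1) : ℕ) = (m+1)^2 := by ring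
    rw [e1]
    rfl
  have step2 : Hs 0 = seriesSum (fun m =>
      (-1 : PowerSeries (Polynomial ℚ)) ^ (m + 1 - 1) * zz ^ (m + 1)
        * X ^ ((m + 1) * (m + 1 + 1) / 2)
        * Ring.inverse (∏ j ∈ Finset.range (m + 1), (1 + zz * X ^ (j + 1)))) := by
    rw [Hs]
    apply seriesSum_congr
    intro m
    rw [Rt]
    have e1 : ((m+1)*(m+2)/2 + 0*(m+1) : ℕ) = (m+1)*(m+1+1)/2 := by
      rw [zero_mul, add_zero]
    rw [e1]
    rfl
  rw [step1, G_eq_H, step2]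
end

section
/- For every integer n ≥ 1, the coefficient of q^n in the formal power series (−q;q)_∞ · (1 − φ(−q)), where φ(−q) = ∑_{m=0}^∞ (−1)^m q^{m²} · (∏_{j=1}^{m}(1+q^{2j}))^{−1}, equals D_{o,e}(n) + D_{o,o}(n) + D_{e,e}(n) − D_{e,o}(n). -/
open PowerSeries

/-- The number of partitions of `n` into an even number of distinct parts whose
smallest part is even. -/
noncomputable def Dee (n : ℕ) : ℕ :=
  Nat.card {l : n.Partition // l.parts.Nodup ∧ Even (Multiset.card l.parts) ∧
    Even (sInf {k : ℕ | k ∈ l.parts})}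

/-- The number of partitions of `n` into an even number of distinct parts whose
smallest part is odd. -/
noncomputable def Deo (n : ℕ) : ℕ :=
  Nat.card {l : n.Partition // l.parts.Nodup ∧ Even (Multiset.card l.parts) ∧
    Odd (sInf {k : ℕ | k ∈ l.parts})}

/-- The number of partitions of `n` into an odd number of distinct parts whose
smallest part is even. -/
noncomputable def Doe (n : ℕ) : ℕ :=
  Nat.card {l : n.Partition // l.parts.Nodup ∧ Odd (Multiset.card l.parts) ∧
    Even (sInf {k : ℕ | k ∈ l.parts})}

/-- The number of partitions of `n` into an odd number of distinct parts whose
smallest part is odd. -/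
noncomputable def Doo (n : ℕ) : ℕ :=
  Nat.card {l : n.Partition // l.parts.Nodup ∧ Odd (Multiset.card l.parts) ∧
    Odd (sInf {k : ℕ | k ∈ l.parts})}

/-- The mock theta function `φ(-q)`. -/
noncomputable def phiNeg : PowerSeries ℚ :=
  seriesSum fun m =>
    (-1 : PowerSeries ℚ) ^ m * X ^ (m ^ 2)
      * Ring.inverse (∏ j ∈ Finset.range m, (1 + X ^ (2 * (j + 1))))

open Finset

namespace St4

noncomputable section

/-- congruence modulo `X^N` -/
def MD (N : ℕ) (a b : PowerSeries ℚ) : Prop := (X : PowerSeries ℚ) ^ N ∣ (a - b)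

namespace MD

variable {N : ℕ} {a b c d : PowerSeries ℚ}

lemma rfl (a : PowerSeries ℚ) : MD N a a := by simp [MD]

lemma symm (h : MD N a b) : MD N b a := by
  have := h.neg_right
  simpa [MD, neg_sub] using this

lemma trans (h1 : MD N a b) (h2 : MD N b c) : MD N a c := by
  have : a - c = (a - b) + (b - c) := by ring
  unfold MD at *
  rw [this]; exact dvd_add h1 h2

lemma add (h1 : MD N a b) (h2 : MD N c d) : MD N (a + c) (b + d) := by
  have : a + c - (b + d) = (a - b) + (c - d) := by ring
  unfold MD at *
  rw [this]; exact dvd_add h1 h2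

lemma sub (h1 : MD N a b) (h2 : MD N c d) : MD N (a - c) (b - d) := by
  have : a - c - (b - d) = (a - b) - (c - d) := by ring
  unfold MD at *
  rw [this]; exact dvd_sub h1 h2

lemma mul (h1 : MD N a b) (h2 : MD N c d) : MD N (a * c) (b * d) := by
  have : a * c - b * d = a * (c - d) + (a - b) * d := by ring
  unfold MD at *
  rw [this]; exact dvd_add (h2.mul_left a) (h1.mul_right d)

lemma mul_left (c : PowerSeries ℚ) (h : MD N a b) : MD N (c * a) (c * b) :=
  (MD.rfl c).mul h

lemma mul_right (c : PowerSeries ℚ) (h : MD N a b) : MD N (a * c) (b * c) :=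
  h.mul (MD.rfl c)

lemma sum {ι : Type*} {s : Finset ι} {f g : ι → PowerSeries ℚ}
    (h : ∀ i ∈ s, MD N (f i) (g i)) : MD N (∑ i ∈ s, f i) (∑ i ∈ s, g i) := by
  unfold MD at *
  rw [← Finset.sum_sub_distrib]
  exact Finset.dvd_sum h

lemma coeff (h : MD N a b) {i : ℕ} (hi : i < N) :
    PowerSeries.coeff i a = PowerSeries.coeff i b := by
  have h0 : PowerSeries.coeff i (a - b) = 0 := (X_pow_dvd_iff.1 h) i hi
  rw [map_sub] at h0
  linarith

lemma X_pow_mul {e : ℕ} (h : N ≤ e) (a : PowerSeries ℚ) : MD N (X ^ e * a) 0 := by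
  unfold MD
  rw [sub_zero]
  exact Dvd.dvd.mul_right (pow_dvd_pow X h) a

lemma X_pow_mul' {e : ℕ} (h : N ≤ e) (a : PowerSeries ℚ) : MD N (a * X ^ e) 0 := by
  rw [mul_comm]; exact X_pow_mul h a

lemma mul_one_add {z : ℚ} {e : ℕ} (h : N ≤ e) (a : PowerSeries ℚ) :
    MD N (a * (1 + C z * X ^ e)) a := by
  unfold MD
  have : a * (1 + C z * X ^ e) - a = X ^ e * (a * C z) := by ring
  rw [this]
  exact Dvd.dvd.mul_right (pow_dvd_pow X h) _

lemma one_add (z : ℚ) {e : ℕ} (h : N ≤ e) : MD N (1 + C z * X ^ e) 1 := by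
  have := mul_one_add (z := z) h 1
  rwa [one_mul] at this

lemma prod_one {ι : Type*} (s : Finset ι) (f : ι → PowerSeries ℚ)
    (h : ∀ i ∈ s, MD N (f i) 1) : MD N (∏ i ∈ s, f i) 1 := by
  classical
  induction s using Finset.cons_induction with
  | empty => simpa using MD.rfl 1
  | cons a s ha ih =>
      rw [Finset.prod_cons]
      have h1 := h a (Finset.mem_cons_self a s)
      have h2 := ih (fun i hi => h i (Finset.mem_cons_of_mem hi))
      simpa using h1.mul h2

end MD

/-- Coefficient of a product of `(1 + z X^k)` counts subsets with given sum. -/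
lemma coeff_prod_one_add (s : Finset ℕ) (z : ℚ) (N : ℕ) :
    PowerSeries.coeff N (∏ k ∈ s, (1 + C z * X ^ k)) =
      ∑ A ∈ s.powerset.filter (fun A => A.sum id = N), z ^ A.card := by
  classical
  have h1 : ∀ k ∈ s, (1 + C z * X ^ k : PowerSeries ℚ) = C z * X ^ k + 1 := by
    intro k _; ring
  rw [Finset.prod_congr rfl h1, Finset.prod_add]
  simp only [Finset.prod_const_one, mul_one]
  have h2 : ∀ A : Finset ℕ, (∏ k ∈ A, (C z * X ^ k)) = C (z ^ A.card) * X ^ (A.sum id) := by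
    intro A
    rw [Finset.prod_mul_distrib, Finset.prod_const, Finset.prod_pow_eq_pow_sum, map_pow]
    rfl
  rw [map_sum, Finset.sum_filter]
  apply Finset.sum_congr rfl
  intro A _
  rw [h2 A, PowerSeries.coeff_C_mul, PowerSeries.coeff_X_pow]
  rcases eq_or_ne (A.sum id) N with h | h
  · rw [if_pos h.symm, if_pos h, mul_one]
  · rw [if_neg (Ne.symm h), if_neg h, mul_zero]

section Counting

variable {n : ℕ}

/-- The subsets of `[1, 2n+1]` with sum `n` (= partitions of `n` into distinct parts). -/
def PP (n : ℕ) : Finset (Finset ℕ) :=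
  (Ico 1 (2*n+2)).powerset.filter (fun A => A.sum id = n)

/-- minimum of a finset of naturals (junk value `0` on `∅`). -/
def fmin (A : Finset ℕ) : ℕ := sInf {k : ℕ | k ∈ A}

lemma elt_le_sum {A : Finset ℕ} {k : ℕ} (hk : k ∈ A) : k ≤ A.sum id :=
  Finset.single_le_sum (f := id) (fun _ _ => Nat.zero_le _) hk

lemma mem_PP {A : Finset ℕ} : A ∈ PP n ↔ (∀ k ∈ A, 1 ≤ k) ∧ A.sum id = n := by
  constructor
  · intro h
    rw [PP, Finset.mem_filter, Finset.mem_powerset] at h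
    exact ⟨fun k hk => (Finset.mem_Ico.1 (h.1 hk)).1, h.2⟩
  · rintro ⟨h1, h2⟩
    rw [PP, Finset.mem_filter, Finset.mem_powerset]
    refine ⟨fun k hk => Finset.mem_Ico.2 ⟨h1 k hk, ?_⟩, h2⟩
    have := elt_le_sum hk
    omega

lemma PP_elt_le {A : Finset ℕ} (hA : A ∈ PP n) {k : ℕ} (hk : k ∈ A) : k ≤ n := by
  have h2 := (mem_PP.1 hA).2
  have := elt_le_sum hk
  omega

lemma PP_nonempty (hn : 1 ≤ n) {A : Finset ℕ} (hA : A ∈ PP n) : A.Nonempty := by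
  rcases Finset.eq_empty_or_nonempty A with rfl | h
  · exfalso
    have h2 := (mem_PP.1 hA).2
    simp at h2
    omega
  · exact h

lemma fmin_mem {A : Finset ℕ} (h : A.Nonempty) : fmin A ∈ A := by
  have : {k : ℕ | k ∈ A}.Nonempty := by
    obtain ⟨x, hx⟩ := h
    exact ⟨x, hx⟩
  exact Nat.sInf_mem this

lemma fmin_le {A : Finset ℕ} {k : ℕ} (hk : k ∈ A) : fmin A ≤ k := Nat.sInf_le hk

lemma fmin_eq {A : Finset ℕ} {b : ℕ} (hb : b ∈ A) (hlb : ∀ k ∈ A, b ≤ k) : fmin A = b :=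
  le_antisymm (Nat.sInf_le hb) (le_csInf ⟨b, hb⟩ (fun k hk => hlb k hk))

lemma PP_fmin_mem (hn : 1 ≤ n) {A : Finset ℕ} (hA : A ∈ PP n) : fmin A ∈ A :=
  fmin_mem (PP_nonempty hn hA)

lemma PP_fmin_bounds (hn : 1 ≤ n) {A : Finset ℕ} (hA : A ∈ PP n) :
    1 ≤ fmin A ∧ fmin A ≤ n := by
  have hm := PP_fmin_mem hn hA
  exact ⟨(mem_PP.1 hA).1 _ hm, PP_elt_le hA hm⟩

lemma coeff_bottom (hn : 1 ≤ n) (b cap : ℕ) (z : ℚ) (hb : 1 ≤ b) (hcap1 : n + 1 ≤ cap)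
    (hcap2 : cap ≤ 2*n+2) :
    PowerSeries.coeff n (X ^ b * ∏ k ∈ Ico (b+1) cap, (1 + C z * X ^ k)) =
      ∑ B ∈ (PP n).filter (fun B => fmin B = b), z ^ (B.card - 1) := by
  classical
  rcases le_or_gt b n with hbn | hbn
  · have hco : PowerSeries.coeff n (X ^ b * ∏ k ∈ Ico (b+1) cap, (1 + C z * X ^ k)) =
        PowerSeries.coeff (n - b) (∏ k ∈ Ico (b+1) cap, (1 + C z * X ^ k)) := by
      conv_lhs => rw [show n = b + (n - b) by omega]
      rw [show b + (n - b) = (n - b) + b by omega]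
      exact PowerSeries.coeff_X_pow_mul _ b (n - b)
    rw [hco, coeff_prod_one_add]
    refine Finset.sum_bij (fun A _ => insert b A) ?_ ?_ ?_ ?_
    · intro A hA
      rw [Finset.mem_filter, Finset.mem_powerset] at hA
      obtain ⟨hsub, hsum⟩ := hA
      have hbA : b ∉ A := by
        intro h
        have := (Finset.mem_Ico.1 (hsub h)).1
        omega
      rw [Finset.mem_filter]
      constructor
      · rw [mem_PP]
        constructor
        · intro k hk
          rcases Finset.mem_insert.1 hk with rfl | hk
          · exact hb
          · have := (Finset.mem_Ico.1 (hsub hk)).1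
            omega
        · rw [Finset.sum_insert hbA, hsum]
          simp only [id]
          omega
      · apply fmin_eq (Finset.mem_insert_self _ _)
        intro k hk
        rcases Finset.mem_insert.1 hk with rfl | hk
        · exact le_refl _
        · have := (Finset.mem_Ico.1 (hsub hk)).1
          omega
    · intro A1 h1 A2 h2 heq
      rw [Finset.mem_filter, Finset.mem_powerset] at h1 h2
      have hb1 : b ∉ A1 := by
        intro h
        have := (Finset.mem_Ico.1 (h1.1 h)).1
        omega
      have hb2 : b ∉ A2 := by
        intro h
        have := (Finset.mem_Ico.1 (h2.1 h)).1
        omega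
      have := congrArg (fun S => Finset.erase S b) heq
      simpa [Finset.erase_insert hb1, Finset.erase_insert hb2] using this
    · intro B hB
      rw [Finset.mem_filter] at hB
      obtain ⟨hBP, hfB⟩ := hB
      have hbB : b ∈ B := hfB ▸ PP_fmin_mem hn hBP
      refine ⟨B.erase b, ?_, Finset.insert_erase hbB⟩
      rw [Finset.mem_filter, Finset.mem_powerset]
      constructor
      · intro k hk
        have hkB := Finset.mem_of_mem_erase hk
        have hne := Finset.ne_of_mem_erase hk
        have h1 : b ≤ k := hfB ▸ fmin_le hkB
        have h2 : k ≤ n := PP_elt_le hBP hkB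
        rw [Finset.mem_Ico]
        omega
      · have hsum : (insert b (B.erase b)).sum id = n := by
          rw [Finset.insert_erase hbB]
          exact (mem_PP.1 hBP).2
        rw [Finset.sum_insert (Finset.notMem_erase _ _)] at hsum
        simp only [id] at hsum ⊢
        omega
    · intro A hA
      rw [Finset.mem_filter, Finset.mem_powerset] at hA
      have hbA : b ∉ A := by
        intro h
        have := (Finset.mem_Ico.1 (hA.1 h)).1
        omega
      rw [Finset.card_insert_of_notMem hbA]
      simp
  · have h0 : PowerSeries.coeff n (X ^ b * ∏ k ∈ Ico (b+1) cap, (1 + C z * X ^ k)) = 0 := by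
      have hdvd : (X : PowerSeries ℚ) ^ b ∣ X ^ b * ∏ k ∈ Ico (b+1) cap, (1 + C z * X ^ k) :=
        dvd_mul_right _ _
      exact (X_pow_dvd_iff.1 hdvd) n hbn
    rw [h0, Finset.filter_false_of_mem, Finset.sum_empty]
    intro B hBP heq
    have := (PP_fmin_bounds hn hBP).2
    omega

lemma sum_fiber_odd (hn : 1 ≤ n) (w : Finset ℕ → ℚ) :
    ∑ u ∈ range (n+1), ∑ B ∈ (PP n).filter (fun B => fmin B = 2*u+1), w B
      = ∑ B ∈ (PP n).filter (fun B => Odd (fmin B)), w B := by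
  classical
  have hmaps : ∀ B ∈ (PP n).filter (fun B => Odd (fmin B)),
      (fmin B - 1)/2 ∈ range (n+1) := by
    intro B hB
    rw [Finset.mem_filter] at hB
    have := (PP_fmin_bounds hn hB.1).2
    rw [Finset.mem_range]
    omega
  rw [← Finset.sum_fiberwise_of_maps_to hmaps w]
  apply Finset.sum_congr rfl
  intro u hu
  refine Finset.sum_congr ?_ (fun _ _ => rfl)
  rw [Finset.filter_filter]
  apply Finset.filter_congr
  intro B hB
  have h1 := (PP_fmin_bounds hn hB).1
  rw [Nat.odd_iff]
  constructor
  · intro h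
    omega
  · rintro ⟨h2, h3⟩
    omega

lemma sum_fiber_even (hn : 1 ≤ n) (w : Finset ℕ → ℚ) :
    ∑ u ∈ Ico 1 (n+1), ∑ B ∈ (PP n).filter (fun B => fmin B = 2*u), w B
      = ∑ B ∈ (PP n).filter (fun B => ¬ Odd (fmin B)), w B := by
  classical
  have hmaps : ∀ B ∈ (PP n).filter (fun B => ¬ Odd (fmin B)),
      (fmin B)/2 ∈ Ico 1 (n+1) := by
    intro B hB
    rw [Finset.mem_filter, Nat.odd_iff] at hB
    have h1 := (PP_fmin_bounds hn hB.1).1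
    have h2 := (PP_fmin_bounds hn hB.1).2
    rw [Finset.mem_Ico]
    omega
  rw [← Finset.sum_fiberwise_of_maps_to hmaps w]
  apply Finset.sum_congr rfl
  intro u hu
  rw [Finset.mem_Ico] at hu
  refine Finset.sum_congr ?_ (fun _ _ => rfl)
  rw [Finset.filter_filter]
  apply Finset.filter_congr
  intro B hB
  have h1 := (PP_fmin_bounds hn hB).1
  rw [Nat.odd_iff]
  constructor
  · intro h
    omega
  · rintro ⟨h2, h3⟩
    omega

end Counting

section Series

variable (n : ℕ)

/-- tail product `∏_{j∈[a,c)} (1 + z X^{2j+d})` -/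
def TL (z : ℚ) (d c a : ℕ) : PowerSeries ℚ :=
  ∏ j ∈ Ico a c, (1 + C z * X ^ (2*j + d))

/-- partial theta sums with tails -/
def SG (z : ℚ) (d c t : ℕ) : PowerSeries ℚ :=
  ∑ m ∈ range (n+2), (-1 : PowerSeries ℚ) ^ m * X ^ (m^2) * TL z d c (m + t)

/-- truncated partial theta function -/
def PTf : PowerSeries ℚ := ∑ m ∈ range (n+2), (-1 : PowerSeries ℚ) ^ m * X ^ (m^2)

variable {n}

lemma TL_peel {z : ℚ} {d c a : ℕ} (h : a < c) :
    TL z d c a = (1 + C z * X ^ (2*a + d)) * TL z d c (a+1) :=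
  Finset.prod_eq_prod_Ico_succ_bot h _

lemma TL_one {z : ℚ} {d c a : ℕ} (h : c ≤ a) : TL z d c a = 1 := by
  rw [TL, Finset.Ico_eq_empty (by omega), Finset.prod_empty]

lemma MD.of_eq {N : ℕ} {a b : PowerSeries ℚ} (h : a = b) : MD N a b := by
  rw [h]; exact MD.rfl b

lemma term_step (hn : 1 ≤ n) {z : ℚ} {d c : ℕ} (hd : 1 ≤ d) (hc : n ≤ c) (t m : ℕ) :
    MD (n+1) (X ^ (m^2) * TL z d c (m + t))
      (X ^ (m^2) * TL z d c (m + t + 1)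
        + C z * X ^ (2*t + d - 1) * (X ^ ((m+1)^2) * TL z d c (m + 1 + t))) := by
  obtain ⟨d', rfl⟩ : ∃ d', d = d' + 1 := ⟨d - 1, by omega⟩
  have hsq : (m+1)^2 = m^2 + 2*m + 1 := by ring
  have harr : m + 1 + t = m + t + 1 := by omega
  have hee : 2*t + (d'+1) - 1 = 2*t + d' := by omega
  rw [harr, hee]
  rcases lt_or_ge (m + t) c with h | h
  · rw [TL_peel h]
    have hX : (X : PowerSeries ℚ) ^ (m^2) * X ^ (2*(m+t) + (d'+1))
        = X ^ ((m+1)^2) * X ^ (2*t + d') := by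
      rw [← pow_add, ← pow_add]
      congr 1
      rw [hsq]
      omega
    have heq : X ^ (m^2) * ((1 + C z * X ^ (2*(m+t) + (d'+1))) * TL z (d'+1) c (m+t+1))
        = X ^ (m^2) * TL z (d'+1) c (m+t+1)
          + (X ^ (m^2) * X ^ (2*(m+t) + (d'+1))) * (C z * TL z (d'+1) c (m+t+1)) := by ring
    rw [heq, hX]
    apply MD.add (MD.rfl _)
    apply MD.of_eq
    ring
  · rw [TL_one h, TL_one (show c ≤ m + t + 1 by omega)]
    have hjunk : MD (n+1) (C z * X ^ (2*t + d') * (X ^ ((m+1)^2) * 1)) 0 := by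
      rw [mul_one, show C z * X ^ (2*t + d') * X ^ ((m+1)^2)
          = X ^ ((2*t + d') + (m+1)^2) * C z by rw [pow_add]; ring]
      apply MD.X_pow_mul
      have h1 : 2*m + 1 ≤ (m+1)^2 := by rw [hsq]; linarith [Nat.zero_le (m^2)]
      omega
    have := MD.add (MD.rfl (X ^ (m^2) * (1 : PowerSeries ℚ))) hjunk.symm
    simpa using this

lemma SG_rec (hn : 1 ≤ n) (z : ℚ) {d c : ℕ} (hd : 1 ≤ d) (hc : n ≤ c) (t : ℕ) :
    MD (n+1) ((1 + C z * X ^ (2*t + d - 1)) * SG n z d c t)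
      (SG n z d c (t+1) + C z * X ^ (2*t + d - 1) * TL z d c t) := by
  classical
  set g : ℕ → PowerSeries ℚ := fun m => (-1 : PowerSeries ℚ)^m * X^(m^2) * TL z d c (m + t)
    with hg
  have hterm : ∀ m ∈ range (n+2),
      MD (n+1) ((-1 : PowerSeries ℚ) ^ m * X ^ (m^2) * TL z d c (m + t))
        ((-1 : PowerSeries ℚ) ^ m * X ^ (m^2) * TL z d c (m + (t+1))
          + C z * X ^ (2*t + d - 1) * (-(g (m+1)))) := by
    intro m _
    have h := (term_step (z := z) hn hd hc t m).mul_left ((-1 : PowerSeries ℚ) ^ m)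
    have h3 : -(g (m+1)) = (-1 : PowerSeries ℚ)^m * (X^((m+1)^2) * TL z d c (m+1+t)) := by
      simp only [hg, pow_succ]
      ring
    refine (MD.of_eq (by ring)).trans (h.trans (MD.of_eq ?_))
    rw [h3]
    have h1 : m + (t+1) = m + t + 1 := rfl
    rw [h1]
    ring
  have hsum := MD.sum hterm
  rw [Finset.sum_add_distrib, ← Finset.mul_sum] at hsum
  have hB : (∑ m ∈ range (n+2), -(g (m+1))) = TL z d c t - SG n z d c t - g (n+2) := by
    rw [Finset.sum_neg_distrib]
    have h1 : (∑ m ∈ range (n+2), g (m+1)) = (∑ m ∈ range (n+3), g m) - g 0 := by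
      rw [Finset.sum_range_succ' g (n+2)]
      ring
    have h2 : (∑ m ∈ range (n+3), g m) = SG n z d c t + g (n+2) := by
      rw [Finset.sum_range_succ]
      rfl
    have h3 : g 0 = TL z d c t := by
      rw [hg]
      simp
    rw [h1, h2, h3]
    ring
  rw [hB] at hsum
  have hg2 : MD (n+1) (g (n+2)) 0 := by
    show MD (n+1) ((-1 : PowerSeries ℚ)^(n+2) * X^((n+2)^2) * TL z d c ((n+2) + t)) 0
    have heq2 : (-1 : PowerSeries ℚ)^(n+2) * X^((n+2)^2) * TL z d c ((n+2) + t)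
        = X^((n+2)^2) * ((-1 : PowerSeries ℚ)^(n+2) * TL z d c ((n+2) + t)) := by ring
    rw [heq2]
    apply MD.X_pow_mul
    have : (n+2)^2 = n^2 + 4*n + 4 := by ring
    rw [this]
    linarith [Nat.zero_le (n^2)]
  have hfix : MD (n+1) (C z * X ^ (2*t + d - 1) * (TL z d c t - SG n z d c t - g (n+2)))
      (C z * X ^ (2*t + d - 1) * (TL z d c t - SG n z d c t)) := by
    apply MD.mul_left
    have := MD.sub (MD.rfl (TL z d c t - SG n z d c t)) hg2
    simpa using this
  have hsum2 : MD (n+1) (SG n z d c t)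
      (SG n z d c (t+1) + C z * X ^ (2*t + d - 1) * (TL z d c t - SG n z d c t)) := by
    have h0 : MD (n+1) (SG n z d c t)
        (SG n z d c (t+1) + C z * X ^ (2*t + d - 1) * (TL z d c t - SG n z d c t - g (n+2))) :=
      hsum
    exact h0.trans (MD.add (MD.rfl _) hfix)
  have hfin := hsum2.add (MD.rfl (C z * X ^ (2*t + d - 1) * SG n z d c t))
  refine (MD.of_eq (by ring)).trans (hfin.trans (MD.of_eq (by ring)))

end Series

section Tele

variable {n : ℕ}

lemma SG_top (z : ℚ) (d t : ℕ) (h : n + 1 ≤ t) : SG n z d n t = PTf n := by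
  apply Finset.sum_congr rfl
  intro m _
  rw [TL_one (by omega), mul_one]

lemma tele_main (hn : 1 ≤ n) :
    MD (n+1) (TL 1 1 (n+1) 0 * SG n 1 2 n 0)
      (PTf n + ∑ u ∈ range (n+1), X^(2*u+1) * (TL 1 1 (n+1) (u+1) * TL 1 2 n u)) := by
  have claim : ∀ t, t ≤ n+1 → MD (n+1) (TL 1 1 (n+1) 0 * SG n 1 2 n 0)
      (TL 1 1 (n+1) t * SG n 1 2 n t
        + ∑ u ∈ range t, X^(2*u+1) * (TL 1 1 (n+1) (u+1) * TL 1 2 n u)) := by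
    intro t
    induction t with
    | zero =>
        intro _
        simpa using MD.rfl (TL 1 1 (n+1) 0 * SG n 1 2 n 0)
    | succ t ih =>
        intro ht
        have h1 := ih (by omega)
        have hrec := SG_rec hn 1 (d := 2) (c := n) (by omega) (le_refl n) t
        have he : 2*t + 2 - 1 = 2*t + 1 := by omega
        rw [he] at hrec
        have hpeel : TL (1:ℚ) 1 (n+1) t = (1 + C 1 * X^(2*t+1)) * TL 1 1 (n+1) (t+1) :=
          TL_peel (by omega)
        have h2 : MD (n+1) (TL (1:ℚ) 1 (n+1) t * SG n 1 2 n t)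
            (TL 1 1 (n+1) (t+1) * SG n 1 2 n (t+1)
              + X^(2*t+1) * (TL 1 1 (n+1) (t+1) * TL 1 2 n t)) := by
          have h3 := hrec.mul_left (TL (1:ℚ) 1 (n+1) (t+1))
          refine (MD.of_eq ?_).trans (h3.trans (MD.of_eq ?_))
          · rw [hpeel]; ring
          · rw [map_one]; ring
        have h4 := h1.trans (MD.add h2 (MD.rfl _))
        refine h4.trans (MD.of_eq ?_)
        rw [Finset.sum_range_succ]
        ring
  have hfin := claim (n+1) (le_refl _)
  refine hfin.trans (MD.of_eq ?_)
  rw [TL_one (le_refl (n+1)), SG_top 1 2 (n+1) (le_refl _), one_mul]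

lemma tele_star (hn : 1 ≤ n) :
    MD (n+1) (PTf n)
      (TL (-1) 2 n 0 * TL (-1) 1 n 0
        + ∑ s ∈ Ico 1 (n+1), X^(2*s) * (TL (-1) 1 n s * TL (-1) 2 n s)) := by
  have hCneg : C (-1:ℚ) = -1 := by simp
  have hrec : ∀ t : ℕ, MD (n+1) (SG n (-1) 1 n (t+1))
      ((1 - X^(2*t)) * SG n (-1) 1 n t + X^(2*t) * TL (-1) 1 n t) := by
    intro t
    have h := SG_rec hn (-1) (d := 1) (c := n) (le_refl 1) (le_refl n) t
    have he : 2*t + 1 - 1 = 2*t := by omega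
    rw [he, hCneg] at h
    have h2 := (h.symm).add (MD.rfl (X^(2*t) * TL (-1:ℚ) 1 n t))
    refine (MD.of_eq ?_).trans (h2.trans (MD.of_eq ?_))
    · ring
    · ring
  have claim : ∀ dd t, t + dd = n + 1 → 1 ≤ t → MD (n+1) (PTf n)
      (TL (-1) 2 n (t-1) * SG n (-1) 1 n t
        + ∑ s ∈ Ico t (n+1), X^(2*s) * (TL (-1) 1 n s * TL (-1) 2 n s)) := by
    intro dd
    induction dd with
    | zero =>
        intro t ht h1t
        have ht' : t = n+1 := by omega
        subst ht'
        rw [TL_one (show n ≤ n+1-1 by omega), one_mul, Finset.Ico_self, Finset.sum_empty,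
          add_zero, SG_top (-1) 1 (n+1) (le_refl _)]
        exact MD.rfl _
    | succ dd ih =>
        intro t ht h1t
        have h2 := ih (t+1) (by omega) (by omega)
        have h3 := (hrec t).mul_left (TL (-1:ℚ) 2 n ((t+1)-1))
        have hsimp : (t+1)-1 = t := by omega
        rw [hsimp] at h3 h2
        have hpeel : TL (-1:ℚ) 2 n (t-1) = (1 - X^(2*t)) * TL (-1:ℚ) 2 n t := by
          have hp := TL_peel (z := (-1:ℚ)) (d := 2) (c := n) (a := t-1)
            (show t-1 < n by omega)
          rw [hp, hCneg]
          have h4 : 2*(t-1)+2 = 2*t := by omega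
          have h5 : t-1+1 = t := by omega
          rw [h4, h5]
          ring
        have h6 : MD (n+1) (TL (-1:ℚ) 2 n t * SG n (-1) 1 n (t+1))
            (TL (-1:ℚ) 2 n (t-1) * SG n (-1) 1 n t
              + X^(2*t) * (TL (-1) 1 n t * TL (-1) 2 n t)) := by
          refine h3.trans (MD.of_eq ?_)
          rw [hpeel]
          ring
        have h7 := h2.trans (MD.add h6 (MD.rfl _))
        refine h7.trans (MD.of_eq ?_)
        rw [Finset.sum_eq_sum_Ico_succ_bot (show t < n+1 by omega)]
        ring
  have hc := claim n 1 (by omega) (le_refl 1)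
  rw [show (1:ℕ) - 1 = 0 from rfl] at hc
  have hstar0 : MD (n+1) (SG n (-1) 1 n 1) (TL (-1) 1 n 0) := by
    have h0 := SG_rec hn (-1) (d := 1) (c := n) (le_refl 1) (le_refl n) 0
    rw [show 2*0+1-1 = 0 from rfl, hCneg, pow_zero] at h0
    have h1 := h0.symm
    have h2 := h1.add (MD.rfl (TL (-1:ℚ) 1 n 0))
    refine (MD.of_eq ?_).trans (h2.trans (MD.of_eq ?_))
    · ring
    · ring
  refine hc.trans (MD.add ((MD.rfl (TL (-1:ℚ) 2 n 0)).mul hstar0) (MD.rfl _))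

end Tele

section Merge

variable {n : ℕ}

lemma filter_odd_Ico (a b : ℕ) :
    (Ico a b).filter (fun k => Odd k) = (Ico (a/2) (b/2)).image (fun v => 2*v+1) := by
  ext k
  simp only [Finset.mem_filter, Finset.mem_Ico, Finset.mem_image, Nat.odd_iff]
  constructor
  · rintro ⟨⟨h1, h2⟩, h3⟩
    exact ⟨(k-1)/2, by omega, by omega⟩
  · rintro ⟨v, ⟨h1, h2⟩, rfl⟩
    omega

lemma filter_even_Ico (a b : ℕ) (ha : 1 ≤ a) :
    (Ico a b).filter (fun k => ¬ Odd k) = (Ico ((a-1)/2) ((b-1)/2)).image (fun v => 2*v+2) := by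
  ext k
  simp only [Finset.mem_filter, Finset.mem_Ico, Finset.mem_image, Nat.odd_iff]
  constructor
  · rintro ⟨⟨h1, h2⟩, h3⟩
    exact ⟨(k-2)/2, by omega, by omega⟩
  · rintro ⟨v, ⟨h1, h2⟩, rfl⟩
    omega

lemma prod_parity_merge (z : ℚ) (a b : ℕ) (ha : 1 ≤ a) :
    ∏ k ∈ Ico a b, (1 + C z * X ^ k)
      = TL z 1 (b/2) (a/2) * TL z 2 ((b-1)/2) ((a-1)/2) := by
  classical
  rw [← Finset.prod_filter_mul_prod_filter_not (Ico a b) (fun k => Odd k)]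
  rw [filter_odd_Ico, filter_even_Ico a b ha]
  rw [Finset.prod_image (fun x _ y _ h => by omega),
    Finset.prod_image (fun x _ y _ h => by omega)]
  rfl

end Merge

section PhiSide

variable (n : ℕ)

def Jp (m : ℕ) : PowerSeries ℚ := ∏ j ∈ Finset.range m, (1 + X ^ (2*(j+1)))

def Ff : PowerSeries ℚ := ∏ k ∈ Finset.range (n+1), (1 + X ^ (k+1))

def Phif : PowerSeries ℚ :=
  ∑ m ∈ Finset.range (n+1), (-1 : PowerSeries ℚ)^m * X^(m^2) * Ring.inverse (Jp m)

variable {n}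

lemma one_add_CX (e : ℕ) : (1 + X ^ e : PowerSeries ℚ) = 1 + C 1 * X ^ e := by
  rw [map_one, one_mul]

lemma Jp_eq (m : ℕ) : Jp m = TL 1 2 m 0 := by
  rw [Jp, TL, Finset.range_eq_Ico]
  apply Finset.prod_congr rfl
  intro j _
  rw [one_add_CX]
  congr 2

lemma Jp_isUnit (m : ℕ) : IsUnit (Jp m) := by
  rw [PowerSeries.isUnit_iff_constantCoeff]
  have h : constantCoeff (Jp m) = 1 := by
    rw [Jp, map_prod]
    apply Finset.prod_eq_one
    intro j _
    rw [map_add, map_one, map_pow, constantCoeff_X,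
      zero_pow (show 2*(j+1) ≠ 0 by omega), add_zero]
  rw [h]
  exact isUnit_one

lemma Ff_eq : Ff n = ∏ k ∈ Ico 1 (n+2), (1 + C 1 * X ^ k) := by
  rw [Finset.prod_Ico_eq_prod_range]
  have h : n + 2 - 1 = n + 1 := by omega
  rw [h, Ff]
  apply Finset.prod_congr rfl
  intro k _
  rw [one_add_CX, add_comm 1 k]

lemma Fbig_MD (hn : 1 ≤ n) :
    MD (n+1) (∏ k ∈ Ico 1 (2*n+2), (1 + C 1 * X ^ k)) (Ff n) := by
  have hsplit : (∏ k ∈ Ico 1 (n+2), (1 + C (1:ℚ) * X^k))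
      * (∏ k ∈ Ico (n+2) (2*n+2), (1 + C (1:ℚ) * X^k))
      = ∏ k ∈ Ico 1 (2*n+2), (1 + C (1:ℚ) * X^k) :=
    Finset.prod_Ico_consecutive _ (by omega) (by omega)
  rw [← hsplit, Ff_eq]
  have htail : MD (n+1) (∏ k ∈ Ico (n+2) (2*n+2), (1 + C 1 * X^k)) 1 := by
    apply MD.prod_one
    intro k hk
    rw [Finset.mem_Ico] at hk
    exact MD.one_add 1 (by omega)
  have h2 := htail.mul_left (∏ k ∈ Ico 1 (n+2), (1 + C 1 * X^k))
  simpa using h2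

lemma Fbig_split :
    (∏ k ∈ Ico 1 (2*n+2), (1 + C 1 * X ^ k)) = TL 1 1 (n+1) 0 * TL 1 2 n 0 := by
  rw [prod_parity_merge 1 1 (2*n+2) (le_refl 1),
    show (2*n+2)/2 = n+1 by omega, show (2*n+2-1)/2 = n by omega]

lemma FPhi (hn : 1 ≤ n) : MD (n+1) (Ff n * Phif n) (TL 1 1 (n+1) 0 * SG n 1 2 n 0) := by
  have hm : ∀ m ∈ Finset.range (n+1), MD (n+1)
      ((-1 : PowerSeries ℚ)^m * X^(m^2) * (Ff n * Ring.inverse (Jp m)))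
      (TL 1 1 (n+1) 0 * ((-1 : PowerSeries ℚ)^m * X^(m^2) * TL 1 2 n m)) := by
    intro m hmr
    rw [Finset.mem_range] at hmr
    have hmn : m ≤ n := by omega
    have hsplit : TL (1:ℚ) 2 n 0 = TL 1 2 m 0 * TL 1 2 n m :=
      (Finset.prod_Ico_consecutive _ (Nat.zero_le m) hmn).symm
    have hJ : MD (n+1) (Ff n * Ring.inverse (Jp m)) (TL 1 1 (n+1) 0 * TL 1 2 n m) := by
      have h1 : MD (n+1) (Ff n) (∏ k ∈ Ico 1 (2*n+2), (1 + C 1 * X ^ k)) :=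
        (Fbig_MD hn).symm
      have h2 := h1.mul_right (Ring.inverse (Jp m))
      refine h2.trans (MD.of_eq ?_)
      rw [Fbig_split, hsplit, ← Jp_eq]
      have hcan : Jp m * Ring.inverse (Jp m) = 1 := Ring.mul_inverse_cancel _ (Jp_isUnit m)
      rw [show TL (1:ℚ) 1 (n+1) 0 * (Jp m * TL 1 2 n m) * Ring.inverse (Jp m)
          = TL 1 1 (n+1) 0 * (Jp m * Ring.inverse (Jp m)) * TL 1 2 n m by ring, hcan, mul_one]
    have h3 := hJ.mul_left ((-1 : PowerSeries ℚ)^m * X^(m^2))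
    refine (MD.of_eq (by ring)).trans (h3.trans (MD.of_eq (by ring)))
  have hsum := MD.sum hm
  have hL : Ff n * Phif n
      = ∑ m ∈ Finset.range (n+1),
          (-1 : PowerSeries ℚ)^m * X^(m^2) * (Ff n * Ring.inverse (Jp m)) := by
    rw [Phif, Finset.mul_sum]
    apply Finset.sum_congr rfl
    intro m _
    ring
  rw [← hL] at hsum
  refine hsum.trans ?_
  rw [← Finset.mul_sum]
  apply MD.mul_left
  have hS : SG n 1 2 n 0
      = (∑ m ∈ Finset.range (n+1), (-1:PowerSeries ℚ)^m * X^(m^2) * TL 1 2 n m)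
        + (-1:PowerSeries ℚ)^(n+1) * X^((n+1)^2) * TL 1 2 n (n+1) := by
    rw [SG, Finset.sum_range_succ]
    simp only [Nat.add_zero]
  rw [hS]
  have hjunk : MD (n+1) ((-1:PowerSeries ℚ)^(n+1) * X^((n+1)^2) * TL 1 2 n (n+1)) 0 := by
    rw [show (-1:PowerSeries ℚ)^(n+1) * X^((n+1)^2) * TL 1 2 n (n+1)
        = X^((n+1)^2) * ((-1:PowerSeries ℚ)^(n+1) * TL 1 2 n (n+1)) by ring]
    apply MD.X_pow_mul
    have h : (n+1)^2 = n^2+2*n+1 := by ring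
    rw [h]
    linarith [Nat.zero_le (n^2)]
  have h5 := (MD.rfl (∑ m ∈ Finset.range (n+1), (-1:PowerSeries ℚ)^m * X^(m^2) * TL 1 2 n m)).add
    hjunk.symm
  simpa using h5

end PhiSide

section Extract

variable {n : ℕ}

lemma powerset_filter_eq (c1 : ℕ) (h1 : n+1 ≤ c1) :
    (Ico 1 c1).powerset.filter (fun A => A.sum id = n) = PP n := by
  ext A
  rw [PP, Finset.mem_filter, Finset.mem_filter, Finset.mem_powerset, Finset.mem_powerset]
  constructor
  · rintro ⟨hsub, hsum⟩
    refine ⟨fun k hk => ?_, hsum⟩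
    have h2 := (Finset.mem_Ico.1 (hsub hk)).1
    have h3 := elt_le_sum hk
    rw [hsum] at h3
    exact Finset.mem_Ico.2 ⟨h2, by omega⟩
  · rintro ⟨hsub, hsum⟩
    refine ⟨fun k hk => ?_, hsum⟩
    have h2 := (Finset.mem_Ico.1 (hsub hk)).1
    have h3 := elt_le_sum hk
    rw [hsum] at h3
    exact Finset.mem_Ico.2 ⟨h2, by omega⟩

lemma merge_main (u : ℕ) :
    (∏ k ∈ Ico (2*u+2) (2*n+2), (1 + C 1 * X ^ k)) = TL 1 1 (n+1) (u+1) * TL 1 2 n u := by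
  rw [prod_parity_merge 1 (2*u+2) (2*n+2) (by omega),
    show (2*u+2)/2 = u+1 by omega, show (2*n+2)/2 = n+1 by omega,
    show (2*u+2-1)/2 = u by omega, show (2*n+2-1)/2 = n by omega]

lemma merge_star_tot :
    (∏ k ∈ Ico 1 (2*n+1), (1 + C (-1) * X ^ k)) = TL (-1) 1 n 0 * TL (-1) 2 n 0 := by
  rw [prod_parity_merge (-1) 1 (2*n+1) (le_refl 1), show (2*n+1)/2 = n by omega,
    show (2*n+1-1)/2 = n by omega]

lemma merge_star (s : ℕ) (hs : 1 ≤ s) :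
    (∏ k ∈ Ico (2*s+1) (2*n+1), (1 + C (-1) * X ^ k)) = TL (-1) 1 n s * TL (-1) 2 n s := by
  rw [prod_parity_merge (-1) (2*s+1) (2*n+1) (by omega),
    show (2*s+1)/2 = s by omega, show (2*n+1)/2 = n by omega,
    show (2*s+1-1)/2 = s by omega, show (2*n+1-1)/2 = n by omega]

lemma coeff_Ff (hn : 1 ≤ n) : PowerSeries.coeff n (Ff n) = ((PP n).card : ℚ) := by
  rw [Ff_eq, coeff_prod_one_add, powerset_filter_eq (n+2) (by omega)]
  rw [Finset.sum_congr rfl (fun A _ => one_pow A.card), Finset.sum_const, nsmul_eq_mul, mul_one]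

lemma coeff_FPhi (hn : 1 ≤ n) :
    PowerSeries.coeff n (Ff n * Phif n)
      = PowerSeries.coeff n (PTf n)
        + (((PP n).filter (fun B => Odd (fmin B))).card : ℚ) := by
  have h1 := (FPhi hn).trans (tele_main hn)
  rw [h1.coeff (by omega), map_add, map_sum]
  congr 1
  have hu : ∀ u ∈ range (n+1),
      PowerSeries.coeff n (X^(2*u+1) * (TL 1 1 (n+1) (u+1) * TL 1 2 n u))
        = ∑ B ∈ (PP n).filter (fun B => fmin B = 2*u+1), (1:ℚ) := by
    intro u _
    rw [← merge_main u, coeff_bottom hn (2*u+1) (2*n+2) 1 (by omega) (by omega) (by omega)]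
    exact Finset.sum_congr rfl (fun B _ => one_pow _)
  rw [Finset.sum_congr rfl hu, sum_fiber_odd hn (fun _ => (1:ℚ)), Finset.sum_const,
    nsmul_eq_mul, mul_one]

lemma coeff_PTf (hn : 1 ≤ n) :
    PowerSeries.coeff n (PTf n)
      = (∑ A ∈ PP n, (-1:ℚ)^A.card)
        + ∑ B ∈ (PP n).filter (fun B => ¬ Odd (fmin B)), (-1:ℚ)^(B.card - 1) := by
  have h1 := tele_star hn
  rw [h1.coeff (by omega), map_add, map_sum]
  congr 1
  · rw [show TL (-1:ℚ) 2 n 0 * TL (-1) 1 n 0 = TL (-1) 1 n 0 * TL (-1) 2 n 0 by ring,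
      ← merge_star_tot, coeff_prod_one_add, powerset_filter_eq (2*n+1) (by omega)]
  · have hs : ∀ s ∈ Ico 1 (n+1),
        PowerSeries.coeff n (X^(2*s) * (TL (-1) 1 n s * TL (-1) 2 n s))
          = ∑ B ∈ (PP n).filter (fun B => fmin B = 2*s), (-1:ℚ)^(B.card - 1) := by
      intro s hsr
      rw [Finset.mem_Ico] at hsr
      rw [← merge_star s hsr.1, coeff_bottom hn (2*s) (2*n+1) (-1) (by omega) (by omega) (by omega)]
    rw [Finset.sum_congr rfl hs, sum_fiber_even hn (fun B => (-1:ℚ)^(B.card - 1))]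

lemma coeff_seriesProd_stab {i : ℕ} (hi : i ≤ n) :
    PowerSeries.coeff i (seriesProd (fun k => 1 + X ^ (k + 1) : ℕ → PowerSeries ℚ))
      = PowerSeries.coeff i (Ff n) := by
  rw [seriesProd, coeff_mk]
  have hsplit : Ff n = (∏ k ∈ range (i+1), (1 + X^(k+1)))
      * (∏ k ∈ Ico (i+1) (n+1), (1 + X^(k+1))) := by
    rw [Ff, ← Finset.prod_range_mul_prod_Ico _ (show i+1 ≤ n+1 by omega)]
  have htail : MD (i+1) (∏ k ∈ Ico (i+1) (n+1), (1 + X^(k+1) : PowerSeries ℚ)) 1 := by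
    apply MD.prod_one
    intro k hk
    rw [Finset.mem_Ico] at hk
    rw [one_add_CX]
    exact MD.one_add 1 (by omega)
  have h2 := htail.mul_left (∏ k ∈ range (i+1), (1 + X^(k+1) : PowerSeries ℚ))
  rw [hsplit]
  have h3 : MD (i+1)
      ((∏ k ∈ range (i+1), (1 + X^(k+1) : PowerSeries ℚ))
        * (∏ k ∈ Ico (i+1) (n+1), (1 + X^(k+1))))
      (∏ k ∈ range (i+1), (1 + X^(k+1))) := by simpa using h2
  exact (h3.coeff (by omega)).symm

lemma coeff_phiNeg_stab {j : ℕ} (hj : j ≤ n) :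
    PowerSeries.coeff j phiNeg = PowerSeries.coeff j (Phif n) := by
  rw [phiNeg, seriesSum, coeff_mk, Phif, map_sum]
  simp only [Jp]
  apply Finset.sum_subset
  · intro m hm
    rw [Finset.mem_range] at hm
    rw [Finset.mem_range]
    omega
  · intro m hm1 hm2
    rw [Finset.mem_range] at hm1 hm2
    have hdvd : (X : PowerSeries ℚ)^(m^2) ∣
        (-1 : PowerSeries ℚ)^m * X^(m^2)
          * Ring.inverse (∏ j ∈ Finset.range m, (1 + X ^ (2 * (j + 1)))) :=
      ⟨(-1 : PowerSeries ℚ)^m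
        * Ring.inverse (∏ j ∈ Finset.range m, (1 + X ^ (2 * (j + 1)))), by ring⟩
    refine (X_pow_dvd_iff.1 hdvd) j ?_
    have h3 : m ≤ m^2 := Nat.le_self_pow (by norm_num) m
    omega

lemma card_partition_eq (pc pm : ℕ → Prop) [DecidablePred pc] [DecidablePred pm] :
    Nat.card {l : n.Partition // l.parts.Nodup ∧ pc (Multiset.card l.parts) ∧
      pm (sInf {k : ℕ | k ∈ l.parts})}
      = ((PP n).filter (fun B => pc B.card ∧ pm (fmin B))).card := by
  classical
  let F : {l : n.Partition // l.parts.Nodup ∧ pc (Multiset.card l.parts) ∧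
      pm (sInf {k : ℕ | k ∈ l.parts})}
      → {B : Finset ℕ // B ∈ (PP n).filter (fun B => pc B.card ∧ pm (fmin B))} :=
    fun lp => ⟨lp.1.parts.toFinset, by
      obtain ⟨l, hnd, h1, h2⟩ := lp
      have hval : l.parts.toFinset.val = l.parts := by
        rw [Multiset.toFinset_val, Multiset.dedup_eq_self.2 hnd]
      rw [Finset.mem_filter]
      refine ⟨mem_PP.2 ⟨?_, ?_⟩, ?_, ?_⟩
      · intro k hk
        rw [Multiset.mem_toFinset] at hk
        exact l.parts_pos hk
      · rw [Finset.sum_eq_multiset_sum, hval, Multiset.map_id]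
        exact l.parts_sum
      · rw [show l.parts.toFinset.card = Multiset.card l.parts from
          Multiset.toFinset_card_of_nodup hnd]
        exact h1
      · have hset : {k : ℕ | k ∈ l.parts.toFinset} = {k : ℕ | k ∈ l.parts} := by
          ext k
          exact Multiset.mem_toFinset
        show pm (fmin l.parts.toFinset)
        rw [fmin, hset]
        exact h2⟩
  let G : {B : Finset ℕ // B ∈ (PP n).filter (fun B => pc B.card ∧ pm (fmin B))}
      → {l : n.Partition // l.parts.Nodup ∧ pc (Multiset.card l.parts) ∧
          pm (sInf {k : ℕ | k ∈ l.parts})} :=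
    fun Bp => ⟨⟨Bp.1.val, fun {i} hi => (mem_PP.1 (Finset.mem_filter.1 Bp.2).1).1 i hi, by
        have h := (mem_PP.1 (Finset.mem_filter.1 Bp.2).1).2
        rwa [Finset.sum_eq_multiset_sum, Multiset.map_id] at h⟩,
      Bp.1.nodup, (Finset.mem_filter.1 Bp.2).2.1, by
        show pm (sInf {k : ℕ | k ∈ Bp.1.val})
        exact (Finset.mem_filter.1 Bp.2).2.2⟩
  have e : {l : n.Partition // l.parts.Nodup ∧ pc (Multiset.card l.parts) ∧
      pm (sInf {k : ℕ | k ∈ l.parts})}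
      ≃ {B : Finset ℕ // B ∈ (PP n).filter (fun B => pc B.card ∧ pm (fmin B))} := by
    refine ⟨F, G, ?_, ?_⟩
    · intro lp
      apply Subtype.ext
      apply Nat.Partition.ext
      show lp.1.parts.toFinset.val = lp.1.parts
      rw [Multiset.toFinset_val, Multiset.dedup_eq_self.2 lp.2.1]
    · intro Bp
      apply Subtype.ext
      show Bp.1.val.toFinset = Bp.1
      exact Finset.val_toFinset _
  rw [Nat.card_congr e, Nat.card_eq_finsetCard]

end Extract

end

end St4

open St4 in
/-- Identity (2.8). -/
theorem stmt4 (n : ℕ) (hn : 1 ≤ n) :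
    PowerSeries.coeff n (seriesProd (fun k => 1 + X ^ (k + 1)) * (1 - phiNeg)) =
      (Doe n : ℚ) + (Doo n : ℚ) + (Dee n : ℚ) - (Deo n : ℚ) := by
  classical
  have hA : PowerSeries.coeff n (seriesProd (fun k => 1 + X ^ (k + 1)) * (1 - phiNeg))
      = PowerSeries.coeff n (Ff n * (1 - Phif n)) := by
    rw [PowerSeries.coeff_mul, PowerSeries.coeff_mul]
    apply Finset.sum_congr rfl
    intro p hp
    rw [Finset.HasAntidiagonal.mem_antidiagonal] at hp
    rw [coeff_seriesProd_stab (n := n) (show p.1 ≤ n by omega)]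
    congr 1
    rw [map_sub, map_sub, coeff_phiNeg_stab (n := n) (show p.2 ≤ n by omega)]
  rw [hA, mul_sub, mul_one, map_sub, coeff_Ff hn, coeff_FPhi hn, coeff_PTf hn]
  set P := PP n with hP
  set SO := P.filter (fun B => Odd (fmin B)) with hSO
  set SE := P.filter (fun B => ¬ Odd (fmin B)) with hSE
  have hse : (∑ B ∈ SE, (-1:ℚ)^(B.card - 1)) = -(∑ B ∈ SE, (-1:ℚ)^B.card) := by
    rw [← Finset.sum_neg_distrib]
    apply Finset.sum_congr rfl
    intro B hB
    have hBP : B ∈ PP n := (Finset.mem_filter.1 hB).1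
    have hc : 1 ≤ B.card := Finset.card_pos.2 (PP_nonempty hn hBP)
    have h2 : (-1:ℚ)^(B.card) = (-1)^(B.card-1) * (-1) := by
      rw [← pow_succ]
      congr 1
      omega
    rw [h2]
    ring
  have hsplitsum : (∑ A ∈ P, (-1:ℚ)^A.card)
      = (∑ B ∈ SO, (-1:ℚ)^B.card) + (∑ B ∈ SE, (-1:ℚ)^B.card) := by
    rw [hSO, hSE, Finset.sum_filter_add_sum_filter_not]
  have hsoeven : ∑ B ∈ SO.filter (fun B => Even B.card), (-1:ℚ)^B.card
      = ((SO.filter (fun B => Even B.card)).card : ℚ) := by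
    rw [Finset.sum_congr rfl (fun B hB => Even.neg_one_pow (Finset.mem_filter.1 hB).2),
      Finset.sum_const, nsmul_eq_mul, mul_one]
  have hsoodd : ∑ B ∈ SO.filter (fun B => ¬ Even B.card), (-1:ℚ)^B.card
      = -((SO.filter (fun B => ¬ Even B.card)).card : ℚ) := by
    rw [Finset.sum_congr rfl (fun B hB =>
      Odd.neg_one_pow (Nat.not_even_iff_odd.1 (Finset.mem_filter.1 hB).2)),
      Finset.sum_const, nsmul_eq_mul, mul_neg_one]
  have hsosplit : (∑ B ∈ SO, (-1:ℚ)^B.card)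
      = ((SO.filter (fun B => Even B.card)).card : ℚ)
        - ((SO.filter (fun B => ¬ Even B.card)).card : ℚ) := by
    rw [← Finset.sum_filter_add_sum_filter_not SO (fun B => Even B.card), hsoeven, hsoodd]
    ring
  have hcP : P.card = SO.card + SE.card := by
    rw [hSO, hSE, Finset.card_filter_add_card_filter_not]
  have hcSO : SO.card = (SO.filter (fun B => Even B.card)).card
      + (SO.filter (fun B => ¬ Even B.card)).card :=
    (Finset.card_filter_add_card_filter_not _).symm
  have hcSE : SE.card = (SE.filter (fun B => Even B.card)).card
      + (SE.filter (fun B => ¬ Even B.card)).card :=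
    (Finset.card_filter_add_card_filter_not _).symm
  have hDoe : Doe n = (SE.filter (fun B => ¬ Even B.card)).card := by
    rw [Doe, card_partition_eq Odd Even, hSE, Finset.filter_filter]
    congr 1
    apply Finset.filter_congr
    intro B _
    constructor
    · rintro ⟨h1, h2⟩
      exact ⟨Nat.not_odd_iff_even.2 h2, Nat.not_even_iff_odd.2 h1⟩
    · rintro ⟨h1, h2⟩
      exact ⟨Nat.not_even_iff_odd.1 h2, Nat.not_odd_iff_even.1 h1⟩
  have hDoo : Doo n = (SO.filter (fun B => ¬ Even B.card)).card := by
    rw [Doo, card_partition_eq Odd Odd, hSO, Finset.filter_filter]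
    congr 1
    apply Finset.filter_congr
    intro B _
    constructor
    · rintro ⟨h1, h2⟩
      exact ⟨h2, Nat.not_even_iff_odd.2 h1⟩
    · rintro ⟨h1, h2⟩
      exact ⟨Nat.not_even_iff_odd.1 h2, h1⟩
  have hDee : Dee n = (SE.filter (fun B => Even B.card)).card := by
    rw [Dee, card_partition_eq Even Even, hSE, Finset.filter_filter]
    congr 1
    apply Finset.filter_congr
    intro B _
    constructor
    · rintro ⟨h1, h2⟩
      exact ⟨Nat.not_odd_iff_even.2 h2, h1⟩
    · rintro ⟨h1, h2⟩
      exact ⟨h2, Nat.not_odd_iff_even.1 h1⟩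
  have hDeo : Deo n = (SO.filter (fun B => Even B.card)).card := by
    rw [Deo, card_partition_eq Even Odd, hSO, Finset.filter_filter]
    congr 1
    apply Finset.filter_congr
    intro B _
    constructor
    · rintro ⟨h1, h2⟩
      exact ⟨h2, h1⟩
    · rintro ⟨h1, h2⟩
      exact ⟨h2, h1⟩
  rw [hsplitsum, hse, hsosplit, hDoe, hDoo, hDee, hDeo]
  have hcPQ : (P.card : ℚ) = (SO.card : ℚ) + (SE.card : ℚ) := by exact_mod_cast hcP
  have hcSOQ : (SO.card : ℚ) = ((SO.filter (fun B => Even B.card)).card : ℚ)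
      + ((SO.filter (fun B => ¬ Even B.card)).card : ℚ) := by exact_mod_cast hcSO
  have hcSEQ : (SE.card : ℚ) = ((SE.filter (fun B => Even B.card)).card : ℚ)
      + ((SE.filter (fun B => ¬ Even B.card)).card : ℚ) := by exact_mod_cast hcSE
  linarith
end

section
/- For every integer n ≥ 1, the coefficient of q^n in the formal power series (−q;q)_∞ · (−ψ(−q)), where ψ(−q) = ∑_{m=1}^∞ (−1)^m q^{m²} · (∏_{j=1}^{m}(1+q^{2j−1}))^{−1}, equals D_{o,o}(n). -/
open PowerSeries

/-- The mock theta function `ψ(-q)`. -/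
noncomputable def psiNeg : PowerSeries ℚ :=
  seriesSum fun m =>
    (-1 : PowerSeries ℚ) ^ (m + 1) * X ^ ((m + 1) ^ 2)
      * Ring.inverse (∏ j ∈ Finset.range (m + 1), (1 + X ^ (2 * j + 1)))

open Finset


section c1
/-- The odd staircase `{1, 3, ..., 2r-1}`. -/
def stair (r : ℕ) : Finset ℕ := (Finset.range r).image (fun i => 2*i+1)

lemma mem_stair {r x : ℕ} : x ∈ stair r ↔ ∃ i < r, 2*i+1 = x := by
  simp [stair]

lemma stair_card (r : ℕ) : (stair r).card = r := by
  rw [stair, Finset.card_image_of_injective _ (fun a b h => by omega), Finset.card_range]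

lemma stair_sum (r : ℕ) : ∑ x ∈ stair r, x = r^2 := by
  rw [stair, Finset.sum_image (by intro a _ b _ h; simp only at h; omega)]
  induction r with
  | zero => simp
  | succ k ih => rw [Finset.sum_range_succ, ih]; ring

noncomputable def runlen (S : Finset ℕ) : ℕ := sInf {r : ℕ | 2*r+1 ∉ S}

lemma runlen_set_nonempty (S : Finset ℕ) : {r : ℕ | 2*r+1 ∉ S}.Nonempty := by
  refine ⟨S.sup id, fun h => ?_⟩
  have := Finset.le_sup (f := id) h
  simp only [id_eq] at this
  omega

lemma runlen_spec (S : Finset ℕ) : 2*(runlen S)+1 ∉ S :=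
  Nat.sInf_mem (runlen_set_nonempty S)

lemma mem_of_lt_runlen {S : Finset ℕ} {i : ℕ} (h : i < runlen S) : 2*i+1 ∈ S := by
  by_contra hc
  have : runlen S ≤ i := Nat.sInf_le hc
  omega

lemma runlen_eq {S : Finset ℕ} {r : ℕ} (h1 : ∀ i < r, 2*i+1 ∈ S) (h2 : 2*r+1 ∉ S) :
    runlen S = r := by
  refine le_antisymm (Nat.sInf_le h2) ?_
  by_contra hc
  exact runlen_spec S (h1 _ (by omega))
end c1

noncomputable def evenMin (S : Finset ℕ) : ℕ := sInf {x : ℕ | x ∈ S ∧ Even x}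

noncomputable def oddMin (S : Finset ℕ) : ℕ :=
  sInf {x : ℕ | x ∈ S ∧ Odd x ∧ 2*(runlen S) ≤ x}

def MergeCond (S : Finset ℕ) : Prop :=
  (∃ x ∈ S, Even x) ∧
    ∀ y ∈ S, Odd y → 2*(runlen S) ≤ y → evenMin S + 2*(runlen S) - 1 < y

open scoped Classical in
noncomputable def theta (S : Finset ℕ) : Finset ℕ :=
  if MergeCond S then
    insert (evenMin S + 2*(runlen S) - 1) ((S.erase (evenMin S)).erase (2*(runlen S) - 1))
  else
    insert (2*(runlen S)+1) (insert (oddMin S - (2*(runlen S)+1)) (S.erase (oddMin S)))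

lemma sInf_mem_finset {T : Finset ℕ} (h : T.Nonempty) : sInf {k : ℕ | k ∈ T} ∈ T := by
  have : {k : ℕ | k ∈ T}.Nonempty := ⟨h.choose, h.choose_spec⟩
  exact Nat.sInf_mem this

lemma sInf_le_finset {T : Finset ℕ} {x : ℕ} (h : x ∈ T) : sInf {k : ℕ | k ∈ T} ≤ x :=
  Nat.sInf_le h

lemma sInf_eq_one {T : Finset ℕ} (h1 : (1:ℕ) ∈ T) (h0 : (0:ℕ) ∉ T) :
    sInf {k : ℕ | k ∈ T} = 1 := by
  have ha := sInf_le_finset h1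
  have hb := sInf_mem_finset ⟨1, h1⟩
  interval_cases h : sInf {k : ℕ | k ∈ T}
  · exact absurd hb h0
  · rfl

lemma evenMin_mem {S : Finset ℕ} (h : ∃ x, x ∈ S ∧ Even x) :
    evenMin S ∈ S ∧ Even (evenMin S) := by
  unfold evenMin; exact Nat.sInf_mem h

lemma evenMin_le {S : Finset ℕ} {x : ℕ} (hx : x ∈ S) (h : Even x) : evenMin S ≤ x :=
  Nat.sInf_le ⟨hx, h⟩

lemma oddMin_mem {S : Finset ℕ} (h : ∃ x, x ∈ S ∧ Odd x ∧ 2*(runlen S) ≤ x) :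
    oddMin S ∈ S ∧ Odd (oddMin S) ∧ 2*(runlen S) ≤ oddMin S := by
  unfold oddMin; exact Nat.sInf_mem h

lemma oddMin_le {S : Finset ℕ} {x : ℕ} (hx : x ∈ S) (h1 : Odd x) (h2 : 2*(runlen S) ≤ x) :
    oddMin S ≤ x := Nat.sInf_le ⟨hx, h1, h2⟩

/-- Everything we need about the merge case. -/
lemma merge_case (S : Finset ℕ) (h0 : (0:ℕ) ∉ S)
    (hmin : Odd (sInf {k : ℕ | k ∈ S})) (hpar : Odd (runlen S + S.card))
    (hm : MergeCond S) :
    (0:ℕ) ∉ theta S ∧ (∑ x ∈ theta S, x) = (∑ x ∈ S, x) ∧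
    (theta S).card + 1 = S.card ∧
    Odd (sInf {k : ℕ | k ∈ theta S}) ∧ runlen (theta S) + 1 = runlen S ∧
    theta (theta S) = S := by
  obtain ⟨hE, hOall⟩ := hm
  set e := evenMin S with he_def
  have heS : e ∈ S ∧ Even e := by
    have : {x : ℕ | x ∈ S ∧ Even x}.Nonempty := by
      obtain ⟨x, hx, hx2⟩ := hE; exact ⟨x, hx, hx2⟩
    exact Nat.sInf_mem this
  have heMin : ∀ x ∈ S, Even x → e ≤ x := fun x hx hev => Nat.sInf_le ⟨hx, hev⟩
  have he2 : 2 ≤ e := by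
    rcases heS.2 with ⟨u, hu⟩
    rcases Nat.eq_zero_or_pos e with h | h
    · exact absurd (h ▸ heS.1) h0
    · omega
  set r := runlen S with hr_def
  have hSne : S.Nonempty := ⟨e, heS.1⟩
  have hminS : sInf {k : ℕ | k ∈ S} ∈ S := sInf_mem_finset hSne
  have hr1 : 1 ≤ r := by
    by_contra hc
    have hr0 : r = 0 := by omega
    have h1 := hOall _ hminS hmin (by omega)
    have h2 := sInf_le_finset heS.1
    rw [hr0] at h1
    rcases heS.2 with ⟨u, hu⟩
    rcases hmin with ⟨w, hw⟩
    omega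
  obtain ⟨rr, hrr⟩ : ∃ rr, r = rr + 1 := ⟨r - 1, by omega⟩
  have hst : 2*rr+1 ∈ S := mem_of_lt_runlen (by omega)
  have hnotst : 2*r+1 ∉ S := runlen_spec S
  set v := e + 2*rr + 1 with hv_def
  have hvodd : Odd v := by rcases heS.2 with ⟨u, hu⟩; exact ⟨u + rr, by omega⟩
  have hvS : v ∉ S := by
    intro hvS
    have := hOall v hvS hvodd (by omega)
    omega
  have htheta : theta S = insert v ((S.erase e).erase (2*rr+1)) := by
    rw [theta, if_pos ⟨hE, hOall⟩]
    have h1 : e + 2 * r - 1 = v := by omega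
    have h2 : 2 * r - 1 = 2*rr+1 := by omega
    rw [← he_def, ← hr_def, h1, h2]
  have hmemT : ∀ x, x ∈ theta S ↔ (x = v ∨ (x ∈ S ∧ x ≠ e ∧ x ≠ 2*rr+1)) := by
    intro x
    rw [htheta]
    simp only [mem_insert, mem_erase]
    tauto
  -- membership facts
  have h0T : (0:ℕ) ∉ theta S := by
    rw [hmemT]; push_neg
    exact ⟨by omega, fun h => absurd h h0⟩
  -- sum
  have hsum : (∑ x ∈ theta S, x) = (∑ x ∈ S, x) := by
    rw [htheta, Finset.sum_insert (by rw [Finset.mem_erase, Finset.mem_erase]; push_neg; intro _ _; exact hvS)]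
    have hestep : 2*rr+1 ∈ S.erase e :=
      Finset.mem_erase.mpr ⟨by rcases heS.2 with ⟨u, hu⟩; omega, hst⟩
    have e1 : ∑ x ∈ (S.erase e).erase (2*rr+1), x + (2*rr+1) = ∑ x ∈ S.erase e, x :=
      Finset.sum_erase_add _ _ hestep
    have e2 : ∑ x ∈ S.erase e, x + e = ∑ x ∈ S, x := Finset.sum_erase_add _ _ heS.1
    omega
  -- card
  have hcard : (theta S).card + 1 = S.card := by
    rw [htheta, Finset.card_insert_of_notMem (by rw [Finset.mem_erase, Finset.mem_erase]; push_neg; intro _ _; exact hvS)]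
    have hestep : 2*rr+1 ∈ S.erase e :=
      Finset.mem_erase.mpr ⟨by rcases heS.2 with ⟨u, hu⟩; omega, hst⟩
    have e1 := Finset.card_erase_add_one hestep
    have e2 := Finset.card_erase_add_one heS.1
    omega
  -- runlen
  have hrunT : runlen (theta S) = rr := by
    refine runlen_eq (fun i hi => ?_) ?_
    · rw [hmemT]
      right
      refine ⟨mem_of_lt_runlen (by omega), ?_, by omega⟩
      rcases heS.2 with ⟨u, hu⟩; omega
    · rw [hmemT]; push_neg
      exact ⟨by omega, fun _ _ => rfl⟩
  have hvT : v ∈ theta S := (hmemT v).mpr (Or.inl rfl)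
  have hTne : (theta S).Nonempty := ⟨v, hvT⟩
  -- min of theta S is odd
  have hminT : Odd (sInf {k : ℕ | k ∈ theta S}) := by
    have hmem := sInf_mem_finset hTne
    set mT := sInf {k : ℕ | k ∈ theta S} with hmT
    rcases Nat.even_or_odd mT with hev | hod
    · exfalso
      rcases (hmemT mT).mp hmem with h | ⟨hS, hne, hns⟩
      · rcases hvodd with ⟨u,hu⟩; rcases hev with ⟨w,hw⟩; omega
      · have h1 : e ≤ mT := heMin _ hS hev
        rcases Nat.eq_zero_or_pos rr with hrr0 | hrrpos
        · have h2 : mT ≤ v := sInf_le_finset hvT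
          rcases hev with ⟨w,hw⟩; rcases heS.2 with ⟨u,hu⟩; omega
        · have h1T : (1:ℕ) ∈ theta S := by
            rw [hmemT]; right
            have h01 : (2*0+1:ℕ) ∈ S := mem_of_lt_runlen (by omega)
            norm_num at h01
            exact ⟨h01, by rcases heS.2 with ⟨u,hu⟩; omega, by omega⟩
          have h2 := sInf_le_finset h1T
          rcases hev with ⟨w,hw⟩; omega
    · exact hod
  -- theta (theta S) = S
  have hnotMergeT : ¬ MergeCond (theta S) := by
    rintro ⟨hET, hOT⟩
    have he'T : evenMin (theta S) ∈ theta S ∧ Even (evenMin (theta S)) := by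
      refine evenMin_mem ?_
      obtain ⟨x,hx,h2⟩ := hET; exact ⟨x,hx,h2⟩
    have he'S : evenMin (theta S) ∈ S ∧ evenMin (theta S) ≠ e := by
      rcases (hmemT _).mp he'T.1 with h | ⟨hS, hne, _⟩
      · exfalso; rcases hvodd with ⟨u,hu⟩; rcases he'T.2 with ⟨w,hw⟩; omega
      · exact ⟨hS, hne⟩
    have h1 : e ≤ evenMin (theta S) := heMin _ he'S.1 he'T.2
    have h2 := hOT v hvT hvodd (by rw [hrunT]; omega)
    rw [hrunT] at h2
    rcases he'T.2 with ⟨w,hw⟩; rcases heS.2 with ⟨u,hu⟩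
    have hne := he'S.2
    omega
  have hoT : oddMin (theta S) = v := by
    have hle : oddMin (theta S) ≤ v := oddMin_le hvT hvodd (by rw [hrunT]; omega)
    obtain ⟨hoT', hoodd, hole⟩ := oddMin_mem ⟨v, hvT, hvodd, by rw [hrunT]; omega⟩
    rcases (hmemT _).mp hoT' with h | ⟨hS, hne, hns⟩
    · exact h
    · exfalso
      rw [hrunT] at hole
      have h2 := hOall _ hS hoodd (by rcases hoodd with ⟨u,hu⟩; omega)
      omega
  have hback : theta (theta S) = S := by
    rw [theta, if_neg hnotMergeT, hrunT, hoT]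
    have hve : v - (2*rr+1) = e := by omega
    rw [hve]
    ext x
    simp only [mem_insert, mem_erase, hmemT]
    constructor
    · rintro (rfl | rfl | ⟨hne, (rfl | ⟨hS,_,_⟩)⟩)
      · exact hst
      · exact heS.1
      · exact absurd rfl hne
      · exact hS
    · intro hxS
      by_cases hx1 : x = 2*rr+1
      · exact Or.inl hx1
      by_cases hx2 : x = e
      · exact Or.inr (Or.inl hx2)
      · exact Or.inr (Or.inr ⟨fun h => hvS (h ▸ hxS), Or.inr ⟨hxS, hx2, hx1⟩⟩)
  exact ⟨h0T, hsum, hcard, hminT, by rw [hrunT]; omega, hback⟩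

lemma stair_subset_iff {S : Finset ℕ} {r : ℕ} : stair r ⊆ S ↔ r ≤ runlen S := by
  constructor
  · intro h
    by_contra hc
    exact runlen_spec S (h (mem_stair.mpr ⟨runlen S, by omega, rfl⟩))
  · intro h x hx
    obtain ⟨i, hi, rfl⟩ := mem_stair.mp hx
    exact mem_of_lt_runlen (by omega)

/-- Everything we need about the split case. -/
lemma split_case (S : Finset ℕ) (h0 : (0:ℕ) ∉ S)
    (hmin : Odd (sInf {k : ℕ | k ∈ S})) (hpar : Odd (runlen S + S.card))
    (hs : ¬ MergeCond S) :
    (0:ℕ) ∉ theta S ∧ (∑ x ∈ theta S, x) = (∑ x ∈ S, x) ∧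
    (theta S).card = S.card + 1 ∧
    Odd (sInf {k : ℕ | k ∈ theta S}) ∧ runlen (theta S) = runlen S + 1 ∧
    theta (theta S) = S := by
  set r := runlen S with hr_def
  have hnotst : 2*r+1 ∉ S := runlen_spec S
  have hstair : ∀ i, i < r → 2*i+1 ∈ S := fun i hi => mem_of_lt_runlen hi
  have hO : ∃ x, x ∈ S ∧ Odd x ∧ 2*r ≤ x := by
    by_contra hno
    push_neg at hno
    by_cases hE : ∃ x ∈ S, Even x
    · exact hs ⟨hE, fun y hy h1 h2 => by have := hno y hy h1; omega⟩
    · push_neg at hE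
      have hSs : S = stair r := by
        ext x
        rw [mem_stair]
        constructor
        · intro hx
          have hox : Odd x := Nat.not_even_iff_odd.mp (hE x hx)
          have hlt : x < 2*r := hno x hx hox
          rcases hox with ⟨i, hi⟩
          exact ⟨i, by omega, by omega⟩
        · rintro ⟨i, hi, rfl⟩
          exact hstair i hi
      have hcards : S.card = r := by rw [hSs, stair_card]
      rw [hcards] at hpar
      have := Nat.odd_iff.mp hpar
      omega
  obtain ⟨ho1, ho2, ho3⟩ := oddMin_mem hO
  set o := oddMin S with ho_def
  have hone : o ≠ 2*r+1 := fun h => hnotst (h ▸ ho1)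
  have ho4 : 2*r+3 ≤ o := by rcases ho2 with ⟨u,hu⟩; omega
  obtain ⟨c, hc, hceven, hc2⟩ : ∃ c, o = 2*r+1+c ∧ Even c ∧ 2 ≤ c := by
    refine ⟨o - (2*r+1), by omega, ?_, by omega⟩
    rcases ho2 with ⟨u,hu⟩
    exact ⟨u - r, by omega⟩
  have hcS : c ∉ S := by
    intro hcS
    rw [MergeCond] at hs; push_neg at hs
    obtain ⟨y, hy, h1, h2, h3⟩ := hs ⟨c, hcS, hceven⟩
    have hoy : o ≤ y := oddMin_le hy h1 h2
    obtain ⟨he1, he2⟩ := evenMin_mem ⟨c, hcS, hceven⟩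
    have hec : evenMin S ≤ c := evenMin_le hcS hceven
    have he3 : evenMin S ≠ 0 := fun h => h0 (h ▸ he1)
    rcases he2 with ⟨u, hu⟩
    omega
  have htheta : theta S = insert (2*r+1) (insert c (S.erase o)) := by
    have h1 : o - (2*r+1) = c := by omega
    rw [theta, if_neg hs, ← hr_def, ← ho_def, h1]
  have hmemT : ∀ x, x ∈ theta S ↔ (x = 2*r+1 ∨ x = c ∨ (x ∈ S ∧ x ≠ o)) := by
    intro x
    rw [htheta]
    simp only [mem_insert, mem_erase]
    tauto
  have h0T : (0:ℕ) ∉ theta S := by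
    rw [hmemT]; push_neg
    exact ⟨by omega, by omega, fun h => absurd h h0⟩
  have hsum : (∑ x ∈ theta S, x) = (∑ x ∈ S, x) := by
    rw [htheta]
    rw [Finset.sum_insert (by
      simp only [mem_insert, mem_erase]
      push_neg
      refine ⟨by rcases hceven with ⟨u,hu⟩; omega, fun _ => hnotst⟩)]
    rw [Finset.sum_insert (by
      simp only [mem_erase]
      push_neg
      intro _; exact hcS)]
    have e1 : ∑ x ∈ S.erase o, x + o = ∑ x ∈ S, x := Finset.sum_erase_add _ _ ho1
    omega
  have hcard : (theta S).card = S.card + 1 := by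
    rw [htheta]
    rw [Finset.card_insert_of_notMem (by
      simp only [mem_insert, mem_erase]
      push_neg
      refine ⟨by rcases hceven with ⟨u,hu⟩; omega, fun _ => hnotst⟩)]
    rw [Finset.card_insert_of_notMem (by
      simp only [mem_erase]
      push_neg
      intro _; exact hcS)]
    have e1 := Finset.card_erase_add_one ho1
    omega
  have hrunT : runlen (theta S) = r + 1 := by
    refine runlen_eq (fun i hi => ?_) ?_
    · rw [hmemT]
      rcases Nat.lt_or_ge i r with h | h
      · exact Or.inr (Or.inr ⟨hstair i h, by omega⟩)
      · have : i = r := by omega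
        subst this
        exact Or.inl rfl
    · rw [hmemT]; push_neg
      refine ⟨by omega, by rcases hceven with ⟨u,hu⟩; omega, fun hS => ?_⟩
      have : o ≤ 2*(r+1)+1 := oddMin_le hS ⟨r+1, by omega⟩ (by omega)
      omega
  have h1T : (1:ℕ) ∈ theta S := by
    rw [hmemT]
    rcases Nat.eq_zero_or_pos r with h | h
    · exact Or.inl (by omega)
    · exact Or.inr (Or.inr ⟨by have := hstair 0 h; simpa using this, by omega⟩)
  have hminT : Odd (sInf {k : ℕ | k ∈ theta S}) := by
    rw [sInf_eq_one h1T h0T]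
    exact ⟨0, rfl⟩
  have hcT : c ∈ theta S := (hmemT c).mpr (Or.inr (Or.inl rfl))
  have heT : evenMin (theta S) = c := by
    have hle : evenMin (theta S) ≤ c := evenMin_le hcT hceven
    obtain ⟨h1, h2⟩ := evenMin_mem ⟨c, hcT, hceven⟩
    rcases (hmemT _).mp h1 with h | h | ⟨hS, hne⟩
    · exfalso; rcases h2 with ⟨u, hu⟩; omega
    · exact h
    · exfalso
      rw [MergeCond] at hs; push_neg at hs
      obtain ⟨y, hy, hy1, hy2, hy3⟩ := hs ⟨_, hS, h2⟩
      have hoy : o ≤ y := oddMin_le hy hy1 hy2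
      have he : evenMin S ≤ evenMin (theta S) := evenMin_le hS h2
      omega
  have hmT : MergeCond (theta S) := by
    refine ⟨⟨c, hcT, hceven⟩, ?_⟩
    intro y hy hyodd hyge
    rw [hrunT] at hyge
    rw [heT, hrunT]
    rcases (hmemT y).mp hy with rfl | rfl | ⟨hS, hne⟩
    · omega
    · exfalso; rcases hceven with ⟨u,hu⟩; rcases hyodd with ⟨w,hw⟩; omega
    · have h1 : o ≤ y := oddMin_le hS hyodd (by omega)
      have h2 : o ≠ y := fun h => hne (h.symm)
      omega
  have hback : theta (theta S) = S := by
    rw [theta, if_pos hmT, heT, hrunT]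
    have h1 : c + 2*(r+1) - 1 = o := by omega
    have h2 : 2*(r+1) - 1 = 2*r+1 := by omega
    rw [h1, h2]
    ext x
    simp only [mem_insert, mem_erase, hmemT]
    constructor
    · rintro (rfl | ⟨hne1, hne2, (h|h|⟨hS,_⟩)⟩)
      · exact ho1
      · exact absurd h hne1
      · exact absurd h hne2
      · exact hS
    · intro hxS
      by_cases hx : x = o
      · exact Or.inl hx
      · refine Or.inr ⟨fun h => hnotst (h ▸ hxS), fun h => hcS (h ▸ hxS), Or.inr (Or.inr ⟨hxS, hx⟩)⟩
  exact ⟨h0T, hsum, hcard, hminT, hrunT, hback⟩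

/-- Master lemma: `theta` is a sum-preserving involution flipping the parity of
the run length on the relevant domain. -/
lemma theta_master (S : Finset ℕ) (h0 : (0:ℕ) ∉ S)
    (hmin : Odd (sInf {k : ℕ | k ∈ S})) (hpar : Odd (runlen S + S.card)) :
    (0:ℕ) ∉ theta S ∧ (∑ x ∈ theta S, x) = (∑ x ∈ S, x) ∧
    Odd (sInf {k : ℕ | k ∈ theta S}) ∧ Odd (runlen (theta S) + (theta S).card) ∧
    (Odd (runlen (theta S)) ↔ ¬ Odd (runlen S)) ∧ theta (theta S) = S := by
  rw [Nat.odd_iff] at hpar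
  by_cases hm : MergeCond S
  · obtain ⟨a, b, c, d, e, f⟩ := merge_case S h0 hmin (Nat.odd_iff.mpr hpar) hm
    refine ⟨a, b, d, ?_, ?_, f⟩
    · rw [Nat.odd_iff]; omega
    · rw [Nat.odd_iff, Nat.odd_iff]; omega
  · obtain ⟨a, b, c, d, e, f⟩ := split_case S h0 hmin (Nat.odd_iff.mpr hpar) hm
    refine ⟨a, b, d, ?_, ?_, f⟩
    · rw [Nat.odd_iff]; omega
    · rw [Nat.odd_iff, Nat.odd_iff]; omega

lemma subset_Icc_of_sum {n : ℕ} {S : Finset ℕ} (h0 : (0:ℕ) ∉ S) (hs : ∑ x ∈ S, x = n) :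
    S ⊆ Icc 1 n := by
  intro x hx
  rw [mem_Icc]
  constructor
  · rcases Nat.eq_zero_or_pos x with h | h
    · exact absurd (h ▸ hx) h0
    · omega
  calc x = id x := rfl
  _ ≤ ∑ y ∈ S, id y := Finset.single_le_sum (fun i _ => Nat.zero_le (id i)) hx
  _ = n := hs

/-- The involution theorem: partitions into distinct parts with odd run length
are equinumerous with those with an odd number of parts and odd smallest part. -/
theorem comb_main (n : ℕ) :
    (((Icc 1 n).powerset.filter (fun S => (∑ x ∈ S, x) = n ∧ Odd (runlen S))).card : ℚ) =
    (((Icc 1 n).powerset.filter (fun S => (∑ x ∈ S, x) = n ∧ Odd (S.card) ∧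
        Odd (sInf {k : ℕ | k ∈ S}))).card : ℚ) := by
  classical
  set G := (Icc 1 n).powerset with hG
  -- abbreviations
  have key : ∀ p q : Finset ℕ → Prop, ∀ [DecidablePred p] [DecidablePred q],
      (G.filter (fun S => (∑ x ∈ S, x) = n ∧ p S)).card =
      ((G.filter (fun S => (∑ x ∈ S, x) = n ∧ p S)).filter q).card +
      ((G.filter (fun S => (∑ x ∈ S, x) = n ∧ p S)).filter (fun S => ¬ q S)).card := by
    intro p q _ _
    exact (Finset.card_filter_add_card_filter_not q).symm
  have h0mem : ∀ S ∈ G, (0:ℕ) ∉ S := by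
    intro S hS h
    rw [hG, mem_powerset] at hS
    have := hS h
    rw [mem_Icc] at this
    omega
  -- the two "difference" sets are equinumerous via theta
  have hbij : ((G.filter (fun S => (∑ x ∈ S, x) = n ∧ Odd (runlen S))).filter
        (fun S => ¬ (Odd (S.card) ∧ Odd (sInf {k : ℕ | k ∈ S})))).card =
      ((G.filter (fun S => (∑ x ∈ S, x) = n ∧ Odd (S.card) ∧
          Odd (sInf {k : ℕ | k ∈ S}))).filter (fun S => ¬ Odd (runlen S))).card := by
    refine Finset.card_bij (fun S _ => theta S) ?_ ?_ ?_
    · -- maps into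
      intro S hS
      simp only [mem_filter, mem_powerset, hG] at hS ⊢
      obtain ⟨⟨hsub, hsum, hrun⟩, hnB⟩ := hS
      have h0 : (0:ℕ) ∉ S := fun h => by have := hsub h; rw [mem_Icc] at this; omega
      have h1S : (1:ℕ) ∈ S := by
        have := mem_of_lt_runlen (S := S) (i := 0) (by rcases hrun with ⟨u,hu⟩; omega)
        simpa using this
      have hmin : Odd (sInf {k : ℕ | k ∈ S}) := by
        rw [sInf_eq_one h1S h0]; exact ⟨0, rfl⟩
      have hcard : ¬ Odd (S.card) := fun h => hnB ⟨h, hmin⟩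
      have hpar : Odd (runlen S + S.card) := by
        rw [Nat.odd_iff] at hrun ⊢
        rw [Nat.not_odd_iff] at hcard
        omega
      obtain ⟨m0, msum, mmin, mpar, mflip, _⟩ := theta_master S h0 hmin hpar
      have hrun' : ¬ Odd (runlen (theta S)) := fun h => (mflip.mp h) hrun
      have hcard' : Odd ((theta S).card) := by
        rw [Nat.odd_iff] at mpar ⊢
        rw [Nat.not_odd_iff] at hrun'
        omega
      exact ⟨⟨subset_Icc_of_sum m0 (msum.trans hsum), msum.trans hsum, hcard', mmin⟩, hrun'⟩
    · -- injective
      intro a ha b hb hab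
      simp only [mem_filter, mem_powerset, hG] at ha hb
      obtain ⟨⟨hsuba, hsuma, hruna⟩, hnBa⟩ := ha
      obtain ⟨⟨hsubb, hsumb, hrunb⟩, hnBb⟩ := hb
      have h0a : (0:ℕ) ∉ a := fun h => by have := hsuba h; rw [mem_Icc] at this; omega
      have h0b : (0:ℕ) ∉ b := fun h => by have := hsubb h; rw [mem_Icc] at this; omega
      have h1a : (1:ℕ) ∈ a := by
        have := mem_of_lt_runlen (S := a) (i := 0) (by rcases hruna with ⟨u,hu⟩; omega)
        simpa using this
      have h1b : (1:ℕ) ∈ b := by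
        have := mem_of_lt_runlen (S := b) (i := 0) (by rcases hrunb with ⟨u,hu⟩; omega)
        simpa using this
      have hmina : Odd (sInf {k : ℕ | k ∈ a}) := by
        rw [sInf_eq_one h1a h0a]; exact ⟨0, rfl⟩
      have hminb : Odd (sInf {k : ℕ | k ∈ b}) := by
        rw [sInf_eq_one h1b h0b]; exact ⟨0, rfl⟩
      have hpara : Odd (runlen a + a.card) := by
        have hca : ¬ Odd (a.card) := fun h => hnBa ⟨h, hmina⟩
        rw [Nat.odd_iff] at hruna ⊢; rw [Nat.not_odd_iff] at hca; omega
      have hparb : Odd (runlen b + b.card) := by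
        have hcb : ¬ Odd (b.card) := fun h => hnBb ⟨h, hminb⟩
        rw [Nat.odd_iff] at hrunb ⊢; rw [Nat.not_odd_iff] at hcb; omega
      have ia := (theta_master a h0a hmina hpara).2.2.2.2.2
      have ib := (theta_master b h0b hminb hparb).2.2.2.2.2
      rw [← ia, ← ib, hab]
    · -- surjective
      intro T hT
      simp only [mem_filter, mem_powerset, hG] at hT
      obtain ⟨⟨hsub, hsum, hcard, hmin⟩, hnA⟩ := hT
      have h0 : (0:ℕ) ∉ T := fun h => by have := hsub h; rw [mem_Icc] at this; omega
      have hpar : Odd (runlen T + T.card) := by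
        rw [Nat.odd_iff] at hcard ⊢; rw [Nat.not_odd_iff] at hnA; omega
      obtain ⟨m0, msum, mmin, mpar, mflip, minv⟩ := theta_master T h0 hmin hpar
      have hrun' : Odd (runlen (theta T)) := mflip.mpr hnA
      have hcard' : ¬ Odd ((theta T).card) := by
        rw [Nat.odd_iff] at mpar hrun'; rw [Nat.not_odd_iff]; omega
      refine ⟨theta T, ?_, minv⟩
      simp only [mem_filter, mem_powerset, hG]
      exact ⟨⟨subset_Icc_of_sum m0 (msum.trans hsum), msum.trans hsum, hrun'⟩,
        fun h => hcard' h.1⟩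
  -- now the split/recombine
  have e1 := key (fun S => Odd (runlen S))
      (fun S => Odd (S.card) ∧ Odd (sInf {k : ℕ | k ∈ S}))
  have e2 := key (fun S => Odd (S.card) ∧ Odd (sInf {k : ℕ | k ∈ S}))
      (fun S => Odd (runlen S))
  have e3 : ((G.filter (fun S => (∑ x ∈ S, x) = n ∧ Odd (runlen S))).filter
        (fun S => Odd (S.card) ∧ Odd (sInf {k : ℕ | k ∈ S}))) =
      ((G.filter (fun S => (∑ x ∈ S, x) = n ∧ Odd (S.card) ∧
          Odd (sInf {k : ℕ | k ∈ S}))).filter (fun S => Odd (runlen S))) := by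
    rw [Finset.filter_filter, Finset.filter_filter]
    apply Finset.filter_congr
    intro S _
    constructor
    · rintro ⟨⟨h1, h2⟩, h3⟩; exact ⟨⟨h1, h3⟩, h2⟩
    · rintro ⟨⟨h1, h3⟩, h2⟩; exact ⟨⟨h1, h2⟩, h3⟩
  rw [e1, e2, e3, hbij]

lemma signsum (L : ℕ) : ∑ m ∈ range L, (-1:ℚ)^m = if Odd L then 1 else 0 := by
  induction L with
  | zero => simp
  | succ k ih =>
    rw [Finset.sum_range_succ, ih]
    rcases Nat.even_or_odd k with h | h
    · rw [if_neg (by simpa [Nat.not_odd_iff_even] using h),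
        if_pos (by simpa [Nat.odd_add_one, Nat.not_odd_iff_even] using h), h.neg_one_pow]
      ring
    · rw [if_pos h, if_neg (by simpa [Nat.odd_add_one] using h), h.neg_one_pow]
      ring

lemma runlen_le {n : ℕ} {S : Finset ℕ} (h : S ⊆ Icc 1 n) : runlen S ≤ n + 1 := by
  by_contra hc
  have := h (mem_of_lt_runlen (i := n+1) (by omega))
  rw [mem_Icc] at this
  omega

lemma alt_sum (n : ℕ) :
    ∑ m ∈ range (n+1), (-1:ℚ)^m *
      (((Icc 1 n).powerset.filter (fun S => (∑ x ∈ S, x) = n ∧ stair (m+1) ⊆ S)).card : ℚ) =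
    (((Icc 1 n).powerset.filter (fun S => (∑ x ∈ S, x) = n ∧ Odd (runlen S))).card : ℚ) := by
  classical
  have hcast : ∀ (m : ℕ),
      (((Icc 1 n).powerset.filter (fun S => (∑ x ∈ S, x) = n ∧ stair (m+1) ⊆ S)).card : ℚ)
      = ∑ S ∈ (Icc 1 n).powerset.filter (fun S => (∑ x ∈ S, x) = n),
          (if m+1 ≤ runlen S then (1:ℚ) else 0) := by
    intro m
    rw [← Finset.filter_filter, Finset.card_filter]
    push_cast
    refine Finset.sum_congr rfl (fun S _ => ?_)
    by_cases h : stair (m+1) ⊆ S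
    · rw [if_pos h, if_pos (stair_subset_iff.mp h)]
    · rw [if_neg h, if_neg (fun hc => h (stair_subset_iff.mpr hc))]
  calc ∑ m ∈ range (n+1), (-1:ℚ)^m *
      (((Icc 1 n).powerset.filter (fun S => (∑ x ∈ S, x) = n ∧ stair (m+1) ⊆ S)).card : ℚ)
      = ∑ m ∈ range (n+1), ∑ S ∈ (Icc 1 n).powerset.filter (fun S => (∑ x ∈ S, x) = n),
          (-1:ℚ)^m * (if m+1 ≤ runlen S then (1:ℚ) else 0) := by
        refine Finset.sum_congr rfl (fun m _ => ?_)
        rw [hcast m, Finset.mul_sum]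
    _ = ∑ S ∈ (Icc 1 n).powerset.filter (fun S => (∑ x ∈ S, x) = n),
          ∑ m ∈ range (n+1), (-1:ℚ)^m * (if m+1 ≤ runlen S then (1:ℚ) else 0) :=
        Finset.sum_comm
    _ = ∑ S ∈ (Icc 1 n).powerset.filter (fun S => (∑ x ∈ S, x) = n),
          (if Odd (runlen S) then (1:ℚ) else 0) := by
        refine Finset.sum_congr rfl (fun S hS => ?_)
        simp only [mem_filter, mem_powerset] at hS
        have hb : runlen S ≤ n + 1 := runlen_le hS.1
        have h1 : ∑ m ∈ range (n+1), (-1:ℚ)^m * (if m+1 ≤ runlen S then (1:ℚ) else 0)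
            = ∑ m ∈ range (runlen S), (-1:ℚ)^m := by
          rw [← Finset.sum_subset (Finset.range_subset_range.mpr hb)
            (fun x _ hx => by rw [if_neg (by rw [mem_range] at hx; omega), mul_zero])]
          refine Finset.sum_congr rfl (fun m hm => ?_)
          rw [mem_range] at hm
          rw [if_pos (by omega), mul_one]
        rw [h1, signsum]
    _ = (((Icc 1 n).powerset.filter (fun S => (∑ x ∈ S, x) = n ∧ Odd (runlen S))).card : ℚ) := by
        rw [← Finset.filter_filter, Finset.card_filter]
        push_cast
        rfl

open PowerSeries

lemma coeff_prod_one_add (s : Finset ℕ) (N : ℕ) :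
    PowerSeries.coeff N (∏ x ∈ s, (1 + X^x)) =
      ((s.powerset.filter fun T => (∑ x ∈ T, x) = N).card : ℚ) := by
  classical
  have hexp : ∏ x ∈ s, (1 + X^x : PowerSeries ℚ) = ∑ T ∈ s.powerset, X^(∑ x ∈ T, x) := by
    rw [Finset.prod_congr rfl (fun x _ => add_comm 1 (X^x : PowerSeries ℚ)), Finset.prod_add]
    refine Finset.sum_congr rfl (fun T hT => ?_)
    rw [Finset.prod_const_one, mul_one, Finset.prod_pow_eq_pow_sum]
  rw [hexp, map_sum, Finset.card_filter]
  push_cast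
  refine Finset.sum_congr rfl (fun T _ => ?_)
  rw [PowerSeries.coeff_X_pow]
  by_cases h : (∑ x ∈ T, x) = N
  · rw [if_pos h.symm, if_pos h]
  · rw [if_neg (fun hc => h hc.symm), if_neg h]

lemma Icc_one_eq_image (K : ℕ) : Icc 1 K = (range K).image (· + 1) := by
  ext x
  simp only [mem_Icc, mem_image, mem_range]
  constructor
  · intro h; exact ⟨x - 1, by omega, by omega⟩
  · rintro ⟨i, hi, rfl⟩; omega

lemma prod_range_eq_prod_Icc (K : ℕ) :
    (∏ k ∈ range K, (1 + X^(k+1) : PowerSeries ℚ)) = ∏ x ∈ Icc 1 K, (1 + X^x) := by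
  rw [Icc_one_eq_image, Finset.prod_image (fun a _ b _ h => by omega)]

lemma filter_sum_trunc (K i : ℕ) (h : i ≤ K) :
    (Icc 1 K).powerset.filter (fun T => (∑ x ∈ T, x) = i) =
    (Icc 1 i).powerset.filter (fun T => (∑ x ∈ T, x) = i) := by
  ext T
  simp only [mem_filter, mem_powerset]
  constructor
  · rintro ⟨hsub, hsum⟩
    refine ⟨subset_Icc_of_sum (fun hc => ?_) hsum, hsum⟩
    · have := hsub hc; rw [mem_Icc] at this; omega
  · rintro ⟨hsub, hsum⟩
    exact ⟨hsub.trans (Icc_subset_Icc le_rfl h), hsum⟩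

lemma coeff_seriesProd_eq_s5 (n i : ℕ) (h : i ≤ n) :
    PowerSeries.coeff (R := ℚ) i (seriesProd (fun k => 1 + X^(k+1))) =
      PowerSeries.coeff i (∏ x ∈ Icc 1 n, (1 + X^x)) := by
  rw [seriesProd, PowerSeries.coeff_mk, prod_range_eq_prod_Icc,
    coeff_prod_one_add, coeff_prod_one_add,
    filter_sum_trunc (i+1) i (by omega), filter_sum_trunc n i h]

lemma stair_subset_Icc {n m : ℕ} (h : (m+1)^2 ≤ n) : stair (m+1) ⊆ Icc 1 n := by
  intro x hx
  obtain ⟨i, hi, rfl⟩ := mem_stair.mp hx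
  rw [mem_Icc]
  have h2 : 2*m+1 ≤ (m+1)^2 := by nlinarith
  omega

lemma card_stair_subset (n m : ℕ) (h : (m+1)^2 ≤ n) :
    (((Icc 1 n) \ stair (m+1)).powerset.filter
        (fun T => (∑ x ∈ T, x) = n - (m+1)^2)).card =
    ((Icc 1 n).powerset.filter (fun S => (∑ x ∈ S, x) = n ∧ stair (m+1) ⊆ S)).card := by
  classical
  refine Finset.card_bij' (fun T _ => T ∪ stair (m+1)) (fun S _ => S \ stair (m+1))
    ?_ ?_ ?_ ?_
  · intro T hT
    simp only [mem_filter, mem_powerset] at hT ⊢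
    obtain ⟨hsub, hsum⟩ := hT
    have hdisj : Disjoint T (stair (m+1)) :=
      Finset.disjoint_of_subset_left hsub sdiff_disjoint
    refine ⟨Finset.union_subset (hsub.trans (Finset.sdiff_subset)) (stair_subset_Icc h), ?_,
      Finset.subset_union_right⟩
    rw [Finset.sum_union hdisj, hsum, stair_sum]
    omega
  · intro S hS
    simp only [mem_filter, mem_powerset] at hS ⊢
    obtain ⟨hsub, hsum, hst⟩ := hS
    refine ⟨Finset.sdiff_subset_sdiff hsub le_rfl, ?_⟩
    have := Finset.sum_sdiff (f := id) hst
    simp only [id_eq] at this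
    rw [stair_sum] at this
    omega
  · intro T hT
    simp only [mem_filter, mem_powerset] at hT
    have hdisj : Disjoint T (stair (m+1)) :=
      Finset.disjoint_of_subset_left hT.1 sdiff_disjoint
    show (T ∪ stair (m+1)) \ stair (m+1) = T
    rw [Finset.union_sdiff_cancel_right hdisj]
  · intro S hS
    simp only [mem_filter, mem_powerset] at hS
    show (S \ stair (m+1)) ∪ stair (m+1) = S
    exact Finset.sdiff_union_of_subset hS.2.2

lemma constCoeff_prod_stair (m : ℕ) :
    IsUnit (∏ x ∈ stair (m+1), (1 + X^x : PowerSeries ℚ)) := by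
  rw [PowerSeries.isUnit_iff_constantCoeff, map_prod]
  have : ∀ x ∈ stair (m+1), (constantCoeff (R := ℚ)) (1 + X^x) = 1 := by
    intro x hx
    obtain ⟨i, hi, rfl⟩ := mem_stair.mp hx
    rw [map_add, map_one, pow_succ, map_mul, PowerSeries.constantCoeff_X, mul_zero, add_zero]
  rw [Finset.prod_congr rfl this, Finset.prod_const_one]
  exact isUnit_one

lemma term_eq (n m : ℕ) :
    PowerSeries.coeff n ((∏ x ∈ Icc 1 n, (1 + X^x)) *
      ((-1 : PowerSeries ℚ)^(m+1) * X^((m+1)^2)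
        * Ring.inverse (∏ j ∈ Finset.range (m+1), (1 + X^(2*j+1))))) =
    (-1:ℚ)^(m+1) *
      (((Icc 1 n).powerset.filter (fun S => (∑ x ∈ S, x) = n ∧ stair (m+1) ⊆ S)).card : ℚ) := by
  classical
  have hQ : (∏ j ∈ Finset.range (m+1), (1 + X^(2*j+1) : PowerSeries ℚ))
      = ∏ x ∈ stair (m+1), (1 + X^x) := by
    rw [stair, Finset.prod_image (fun a _ b _ h => by omega)]
  by_cases hsq : (m+1)^2 ≤ n
  · -- main case
    have hst := stair_subset_Icc (n := n) (m := m) hsq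
    have hfact : (∏ x ∈ Icc 1 n, (1 + X^x : PowerSeries ℚ)) =
        (∏ x ∈ (Icc 1 n) \ stair (m+1), (1 + X^x)) * (∏ x ∈ stair (m+1), (1 + X^x)) :=
      (Finset.prod_sdiff hst).symm
    have hunit := constCoeff_prod_stair m
    have hC : (-1 : PowerSeries ℚ)^(m+1) = C ((-1 : ℚ)^(m+1)) := by
      rw [map_pow, map_neg, map_one]
    have hcalc : (∏ x ∈ Icc 1 n, (1 + X^x : PowerSeries ℚ)) *
        ((-1 : PowerSeries ℚ)^(m+1) * X^((m+1)^2)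
          * Ring.inverse (∏ j ∈ Finset.range (m+1), (1 + X^(2*j+1)))) =
        C ((-1 : ℚ)^(m+1)) * (X^((m+1)^2) * ∏ x ∈ (Icc 1 n) \ stair (m+1), (1 + X^x)) := by
      rw [hQ, hfact, hC]
      calc (∏ x ∈ (Icc 1 n) \ stair (m+1), (1 + X^x : PowerSeries ℚ)) *
            (∏ x ∈ stair (m+1), (1 + X^x)) *
          (C ((-1 : ℚ)^(m+1)) * X^((m+1)^2) * Ring.inverse (∏ x ∈ stair (m+1), (1 + X^x)))
          = C ((-1 : ℚ)^(m+1)) * (X^((m+1)^2) * ∏ x ∈ (Icc 1 n) \ stair (m+1), (1 + X^x)) *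
            ((∏ x ∈ stair (m+1), (1 + X^x)) * Ring.inverse (∏ x ∈ stair (m+1), (1 + X^x))) := by
            ring
        _ = _ := by rw [Ring.mul_inverse_cancel _ hunit, mul_one]
    rw [hcalc, PowerSeries.coeff_C_mul]
    congr 1
    rw [PowerSeries.coeff_X_pow_mul', if_pos hsq, coeff_prod_one_add,
      ← card_stair_subset n m hsq]
  · -- degenerate case : both sides vanish
    have hz : PowerSeries.coeff n ((∏ x ∈ Icc 1 n, (1 + X^x)) *
        ((-1 : PowerSeries ℚ)^(m+1) * X^((m+1)^2)
          * Ring.inverse (∏ j ∈ Finset.range (m+1), (1 + X^(2*j+1))))) = 0 := by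
      have hdvd : (X : PowerSeries ℚ)^((m+1)^2) ∣
          ((∏ x ∈ Icc 1 n, (1 + X^x)) *
            ((-1 : PowerSeries ℚ)^(m+1) * X^((m+1)^2)
              * Ring.inverse (∏ j ∈ Finset.range (m+1), (1 + X^(2*j+1))))) :=
        ⟨(∏ x ∈ Icc 1 n, (1 + X^x)) * ((-1 : PowerSeries ℚ)^(m+1)
          * Ring.inverse (∏ j ∈ Finset.range (m+1), (1 + X^(2*j+1)))), by ring⟩
      exact PowerSeries.X_pow_dvd_iff.mp hdvd n (by omega)
    rw [hz]
    have hempty : ((Icc 1 n).powerset.filter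
        (fun S => (∑ x ∈ S, x) = n ∧ stair (m+1) ⊆ S)) = ∅ := by
      rw [Finset.filter_eq_empty_iff]
      rintro S _ ⟨hsum, hst⟩
      have : ∑ x ∈ stair (m+1), x ≤ ∑ x ∈ S, x :=
        Finset.sum_le_sum_of_subset hst
      rw [stair_sum, hsum] at this
      omega
    rw [hempty]
    simp

lemma sum_finset_mk (m : Multiset ℕ) (h : m.Nodup) :
    (∑ x ∈ (⟨m, h⟩ : Finset ℕ), x) = m.sum := by
  show (m.map id).sum = m.sum
  rw [Multiset.map_id]

lemma Doo_eq (n : ℕ) :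
    Doo n = ((Icc 1 n).powerset.filter (fun S => (∑ x ∈ S, x) = n ∧ Odd (S.card) ∧
      Odd (sInf {k : ℕ | k ∈ S}))).card := by
  classical
  rw [Doo, ← Nat.card_eq_finsetCard]
  refine Nat.card_congr ?_
  refine
    { toFun := fun l => ⟨⟨l.1.parts, l.2.1⟩, ?_⟩
      invFun := fun S => ⟨⟨S.1.1, fun hi => ?_, ?_⟩, S.1.2, ?_, ?_⟩
      left_inv := fun l => rfl
      right_inv := fun S => rfl }
  · -- membership in the filtered finset
    obtain ⟨l, hnd, hodd, hmin⟩ := l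
    simp only [mem_filter, mem_powerset]
    refine ⟨?_, ?_, hodd, ?_⟩
    · intro x hx
      have hx' : x ∈ l.parts := hx
      rw [mem_Icc]
      have h1 := l.parts_pos hx'
      have h2 : x ≤ l.parts.sum := Multiset.single_le_sum (fun y _ => Nat.zero_le y) _ hx'
      rw [l.parts_sum] at h2
      omega
    · rw [sum_finset_mk _ hnd, l.parts_sum]
    · convert hmin using 2
      rfl
  · -- parts positive
    have hS := S.2
    simp only [mem_filter, mem_powerset] at hS
    have : _ ∈ Icc 1 n := hS.1 hi
    rw [mem_Icc] at this
    omega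
  · -- parts sum
    have hS := S.2
    simp only [mem_filter, mem_powerset] at hS
    have := hS.2.1
    rwa [show (∑ x ∈ S.1, x) = S.1.1.sum from sum_finset_mk S.1.1 S.1.2] at this
  · -- odd number of parts
    have hS := S.2
    simp only [mem_filter, mem_powerset] at hS
    exact hS.2.2.1
  · -- odd smallest part
    have hS := S.2
    simp only [mem_filter, mem_powerset] at hS
    exact hS.2.2.2

/-- Identity (2.9). -/
theorem stmt5 (n : ℕ) (hn : 1 ≤ n) :
    PowerSeries.coeff n (seriesProd (fun k => 1 + X ^ (k + 1)) * (-psiNeg)) =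
      (Doo n : ℚ) := by
  classical
  have hg : ∀ j ≤ n, PowerSeries.coeff j psiNeg =
      ∑ m ∈ Finset.range (n+1), PowerSeries.coeff j
        ((-1 : PowerSeries ℚ)^(m+1) * X^((m+1)^2)
          * Ring.inverse (∏ i ∈ Finset.range (m+1), (1 + X^(2*i+1)))) := by
    intro j hj
    rw [psiNeg, seriesSum, PowerSeries.coeff_mk]
    refine Finset.sum_subset (Finset.range_subset_range.mpr (by omega)) ?_
    intro m _ hm
    rw [Finset.mem_range] at hm
    have hdvd : (X : PowerSeries ℚ)^((m+1)^2) ∣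
        ((-1 : PowerSeries ℚ)^(m+1) * X^((m+1)^2)
          * Ring.inverse (∏ i ∈ Finset.range (m+1), (1 + X^(2*i+1)))) :=
      ⟨(-1 : PowerSeries ℚ)^(m+1)
          * Ring.inverse (∏ i ∈ Finset.range (m+1), (1 + X^(2*i+1))), by ring⟩
    refine PowerSeries.X_pow_dvd_iff.mp hdvd j ?_
    have h1 : m+1 ≤ (m+1)^2 := Nat.le_self_pow (by omega) _
    omega
  rw [mul_neg, map_neg, PowerSeries.coeff_mul]
  have step1 : ∑ p ∈ antidiagonal n,
      PowerSeries.coeff p.1 (seriesProd fun k => 1 + X^(k+1)) *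
        PowerSeries.coeff p.2 psiNeg
      = ∑ m ∈ Finset.range (n+1), (-1:ℚ)^(m+1) *
          (((Finset.Icc 1 n).powerset.filter
            (fun S => (∑ x ∈ S, x) = n ∧ stair (m+1) ⊆ S)).card : ℚ) := by
    calc ∑ p ∈ antidiagonal n,
        PowerSeries.coeff p.1 (seriesProd fun k => 1 + X^(k+1)) *
          PowerSeries.coeff p.2 psiNeg
        = ∑ p ∈ antidiagonal n, ∑ m ∈ Finset.range (n+1),
            PowerSeries.coeff p.1 (∏ x ∈ Finset.Icc 1 n, (1 + X^x)) *
            PowerSeries.coeff p.2 ((-1 : PowerSeries ℚ)^(m+1) * X^((m+1)^2)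
              * Ring.inverse (∏ i ∈ Finset.range (m+1), (1 + X^(2*i+1)))) := by
          refine Finset.sum_congr rfl (fun p hp => ?_)
          rw [Finset.HasAntidiagonal.mem_antidiagonal] at hp
          rw [coeff_seriesProd_eq_s5 n p.1 (by omega), hg p.2 (by omega), Finset.mul_sum]
      _ = ∑ m ∈ Finset.range (n+1), ∑ p ∈ antidiagonal n,
            PowerSeries.coeff p.1 (∏ x ∈ Finset.Icc 1 n, (1 + X^x)) *
            PowerSeries.coeff p.2 ((-1 : PowerSeries ℚ)^(m+1) * X^((m+1)^2)
              * Ring.inverse (∏ i ∈ Finset.range (m+1), (1 + X^(2*i+1)))) :=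
          Finset.sum_comm
      _ = ∑ m ∈ Finset.range (n+1), (-1:ℚ)^(m+1) *
          (((Finset.Icc 1 n).powerset.filter
            (fun S => (∑ x ∈ S, x) = n ∧ stair (m+1) ⊆ S)).card : ℚ) := by
          refine Finset.sum_congr rfl (fun m _ => ?_)
          rw [← PowerSeries.coeff_mul, term_eq n m]
  rw [step1, ← Finset.sum_neg_distrib]
  have step2 : ∀ m ∈ Finset.range (n+1),
      -((-1:ℚ)^(m+1) * (((Finset.Icc 1 n).powerset.filter
        (fun S => (∑ x ∈ S, x) = n ∧ stair (m+1) ⊆ S)).card : ℚ))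
      = (-1:ℚ)^m * (((Finset.Icc 1 n).powerset.filter
        (fun S => (∑ x ∈ S, x) = n ∧ stair (m+1) ⊆ S)).card : ℚ) := by
    intro m _
    rw [pow_succ]
    ring
  rw [Finset.sum_congr rfl step2, alt_sum n, comb_main n, ← Doo_eq n]
end

section
/- In ℚ[[q]] the identities ∑_{n=1}^∞ q^{n(3n−1)/2} (1 − q^n) = ∑_{n=1}^∞ (−1)^{n−1} q^{n(n+1)/2} · (∏_{j=1}^{n}(1+q^j))^{−1} and ∑_{n=1}^∞ q^{n(3n−1)/2} (1 − q^n) = ∑_{n=1}^∞ q^{n(2n−1)} · (∏_{j=1}^{2n}(1+q^j))^{−1} hold. -/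
open PowerSeries

/- Auxiliary definitions and lemmas. -/

noncomputable def Pp (n : ℕ) : PowerSeries ℚ := ∏ j ∈ Finset.range n, (1 + X ^ (j + 1))

noncomputable def Aq (n : ℕ) : PowerSeries ℚ :=
  ∑ j ∈ Finset.range n, (-1) ^ j * X ^ (j * (n + 1)) * Pp j

noncomputable def fL : ℕ → PowerSeries ℚ := fun m =>
  X ^ ((m + 1) * (3 * (m + 1) - 1) / 2) * (1 - X ^ (m + 1))

noncomputable def fR1 : ℕ → PowerSeries ℚ := fun m =>
  (-1) ^ (m + 1 - 1) * X ^ ((m + 1) * (m + 1 + 1) / 2)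
    * Ring.inverse (∏ j ∈ Finset.range (m + 1), (1 + X ^ (j + 1)))

noncomputable def fR2 : ℕ → PowerSeries ℚ := fun m =>
  X ^ ((m + 1) * (2 * (m + 1) - 1))
    * Ring.inverse (∏ j ∈ Finset.range (2 * (m + 1)), (1 + X ^ (j + 1)))

lemma Pp_succ (n : ℕ) : Pp (n + 1) = Pp n * (1 + X ^ (n + 1)) :=
  Finset.prod_range_succ _ _

lemma isUnit_Pp (n : ℕ) : IsUnit (Pp n) := by
  rw [PowerSeries.isUnit_iff_constantCoeff]
  have : constantCoeff (Pp n) = 1 := by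
    rw [Pp, map_prod]
    apply Finset.prod_eq_one
    intro j _
    simp [map_pow]
  rw [this]; exact isUnit_one

lemma starKey (m : ℕ) :
    (X : PowerSeries ℚ) ^ (m + 2) * Aq (m + 1) + Aq m * (1 + X ^ (m + 1)) =
      1 + (-1) ^ (m + 1) * X ^ (m * (m + 1)) * (1 - X ^ (m + 1)) * Pp (m + 1) := by
  induction m with
  | zero =>
    simp [Aq, Pp_succ, Pp]
    ring
  | succ m _ =>
    have hA2 : (X : PowerSeries ℚ) ^ (m + 3) * Aq (m + 2) =
        ∑ j ∈ Finset.range (m + 2), (-1) ^ j * X ^ ((j + 1) * (m + 3)) * Pp j := by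
      rw [Aq, Finset.mul_sum]
      refine Finset.sum_congr rfl fun j _ => ?_
      rw [show (j + 1) * (m + 3) = (m + 3) + j * (m + 2 + 1) by ring, pow_add]
      ring
    have hMul : Aq (m + 1) * (X : PowerSeries ℚ) ^ (m + 2) =
        ∑ j ∈ Finset.range (m + 1), (-1) ^ j * X ^ ((j + 1) * (m + 2)) * Pp j := by
      rw [Aq, Finset.sum_mul]
      refine Finset.sum_congr rfl fun j _ => ?_
      rw [show (j + 1) * (m + 2) = j * (m + 1 + 1) + (m + 2) by ring, pow_add]
      ring
    have hA1 : Aq (m + 1) =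
        1 + ∑ j ∈ Finset.range m, (-1) ^ (j + 1) * X ^ ((j + 1) * (m + 2)) * Pp (j + 1) := by
      rw [Aq, Finset.sum_range_succ']
      simp only [Pp, pow_zero, one_mul, Nat.zero_mul, mul_one, Finset.range_zero,
        Finset.prod_empty, show m + 1 + 1 = m + 2 from rfl]
      exact add_comm _ _
    have cancel : ∑ j ∈ Finset.range m,
          ((-1 : PowerSeries ℚ) ^ (j + 1) * X ^ ((j + 1) * (m + 2)) * Pp (j + 1)
            + (-1) ^ j * X ^ ((j + 1) * (m + 2)) * Pp j) =
        - ∑ j ∈ Finset.range m, (-1) ^ j * X ^ ((j + 1) * (m + 3)) * Pp j := by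
      rw [← Finset.sum_neg_distrib]
      refine Finset.sum_congr rfl fun j _ => ?_
      rw [Pp_succ, show (j + 1) * (m + 3) = (j + 1) * (m + 2) + (j + 1) by ring, pow_add]
      ring
    have expand : (X : PowerSeries ℚ) ^ (m + 3) * Aq (m + 2) + Aq (m + 1) * (1 + X ^ (m + 2)) =
        1 + (-1) ^ m * X ^ ((m + 1) * (m + 3)) * Pp m
          + (-1) ^ (m + 1) * X ^ ((m + 2) * (m + 3)) * Pp (m + 1)
          + (-1) ^ m * X ^ ((m + 1) * (m + 2)) * Pp m := by
      rw [mul_add, mul_one, hA2, hMul, Finset.sum_range_succ, Finset.sum_range_succ,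
        Finset.sum_range_succ]
      nth_rewrite 1 [hA1]
      have := cancel
      rw [Finset.sum_add_distrib] at this
      linear_combination this
    rw [show (m + 1 + 2) = m + 3 by ring] at *
    rw [expand]
    rw [show (m + 1) * (m + 1 + 1) = (m + 1) * (m + 2) by ring]
    rw [show (m + 1) * (m + 3) = (m + 1) * (m + 2) + (m + 1) by ring,
      show (m + 2) * (m + 3) = (m + 1) * (m + 2) + ((m + 2) + (m + 2)) by ring,
      pow_add, pow_add, pow_add, Pp_succ (m + 1), Pp_succ m]
    ring

lemma expo1 (n : ℕ) : (n + 1) * (3 * (n + 1) - 1) / 2 = (n + 1) * (n + 2) / 2 + n * (n + 1) := by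
  rw [show 3 * (n + 1) - 1 = 3 * n + 2 by omega,
    show (n + 1) * (3 * n + 2) = (n + 1) * (n + 2) + n * (n + 1) * 2 by ring]
  rw [Nat.add_mul_div_right _ _ (by norm_num)]

lemma expo2 (n : ℕ) : (n + 2) * (n + 3) / 2 = (n + 1) * (n + 2) / 2 + (n + 2) := by
  rw [show (n + 2) * (n + 3) = (n + 1) * (n + 2) + (n + 2) * 2 by ring]
  rw [Nat.add_mul_div_right _ _ (by norm_num)]

lemma Ekey (n : ℕ) :
    (∑ k ∈ Finset.range n, (fL k - fR1 k)) * Pp n =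
      (-1) ^ n * X ^ ((n + 1) * (n + 2) / 2) * Aq n := by
  induction n with
  | zero => simp [Aq]
  | succ n IH =>
    rw [Finset.sum_range_succ]
    have SN := starKey n
    have HU := isUnit_Pp (n + 1)
    have Hinv : Ring.inverse (Pp (n + 1)) * Pp (n + 1) = 1 :=
      Ring.inverse_mul_cancel _ HU
    have hfR1 : fR1 n = (-1) ^ n * X ^ ((n + 1) * (n + 2) / 2) * Ring.inverse (Pp (n + 1)) := by
      rw [fR1]
      rw [show (n + 1) * (n + 1 + 1) / 2 = (n + 1) * (n + 2) / 2 from rfl,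
        Nat.add_sub_cancel]
      rfl
    have hfL : fL n = X ^ ((n + 1) * (n + 2) / 2 + n * (n + 1)) * (1 - X ^ (n + 1)) := by
      rw [fL, expo1]
    rw [hfR1, hfL, Pp_succ n]
    rw [show (n + 1 + 1) * (n + 1 + 2) / 2 = (n + 1) * (n + 2) / 2 + (n + 2) from expo2 n]
    rw [Pp_succ n] at Hinv SN
    have hsq : ((-1 : PowerSeries ℚ)) ^ n * (-1) ^ n = 1 := by
      rw [← pow_add, Even.neg_one_pow ⟨n, rfl⟩]
    linear_combination (1 + (X : PowerSeries ℚ) ^ (n + 1)) * IH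
      + ((X : PowerSeries ℚ) ^ ((n + 1) * (n + 2) / 2) * X ^ (n * (n + 1))
          * (X ^ (2 * n + 2) - 1) * Pp n) * hsq
      + ((-1 : PowerSeries ℚ) ^ n * X ^ ((n + 1) * (n + 2) / 2)) * SN
      - ((-1 : PowerSeries ℚ) ^ n * X ^ ((n + 1) * (n + 2) / 2)) * Hinv

lemma coeff_zero_of_dvd {f : PowerSeries ℚ} {e N : ℕ} (h : (X : PowerSeries ℚ) ^ e ∣ f)
    (hN : N < e) : coeff N f = 0 :=
  (PowerSeries.X_pow_dvd_iff.mp h) N hN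

lemma coeff_seriesSum_eq (f : ℕ → PowerSeries ℚ) (N M : ℕ) (hM : N + 1 ≤ M)
    (h : ∀ n, N < n → coeff N (f n) = 0) :
    coeff N (seriesSum f) = coeff N (∑ n ∈ Finset.range M, f n) := by
  rw [seriesSum, coeff_mk, map_sum]
  exact Finset.sum_subset (Finset.range_subset_range.2 hM)
    (fun x _ hx => h x (by simpa using hx))

lemma vanish_fL (N n : ℕ) (h : N < n) : coeff N (fL n) = 0 := by
  have he : n + 1 ≤ (n + 1) * (3 * (n + 1) - 1) / 2 := by
    rw [Nat.le_div_iff_mul_le (by norm_num)]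
    have : 2 ≤ 3 * (n + 1) - 1 := by omega
    calc (n + 1) * 2 ≤ (n + 1) * (3 * (n + 1) - 1) := Nat.mul_le_mul_left _ this
    _ = _ := rfl
  exact coeff_zero_of_dvd (Dvd.intro _ rfl) (lt_of_lt_of_le (by omega) he)

lemma vanish_fR1 (N n : ℕ) (h : N < n) : coeff N (fR1 n) = 0 := by
  have he : n + 1 ≤ (n + 1) * (n + 1 + 1) / 2 := by
    rw [Nat.le_div_iff_mul_le (by norm_num)]
    exact Nat.mul_le_mul_left _ (by omega)
  refine coeff_zero_of_dvd (f := fR1 n) ?_ (lt_of_lt_of_le (by omega) he)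
  exact ⟨(-1) ^ (n + 1 - 1) * Ring.inverse (∏ j ∈ Finset.range (n + 1), (1 + X ^ (j + 1))),
    by rw [fR1]; ring⟩

lemma vanish_fR2 (N n : ℕ) (h : N < n) : coeff N (fR2 n) = 0 := by
  have he : n + 1 ≤ (n + 1) * (2 * (n + 1) - 1) := by
    exact Nat.le_mul_of_pos_right _ (by omega)
  refine coeff_zero_of_dvd (f := fR2 n) ?_ (lt_of_lt_of_le (by omega) he)
  exact ⟨Ring.inverse (∏ j ∈ Finset.range (2 * (n + 1)), (1 + X ^ (j + 1))),
    by rw [fR2]⟩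

lemma pairKey (m : ℕ) : fR1 (2 * m) + fR1 (2 * m + 1) = fR2 m := by
  have HU := isUnit_Pp (2 * m + 2)
  apply HU.mul_right_cancel
  have hPp1 : (∏ j ∈ Finset.range (2 * m + 1), (1 + (X : PowerSeries ℚ) ^ (j + 1))) = Pp (2 * m + 1) := rfl
  have hPp2 : (∏ j ∈ Finset.range (2 * m + 1 + 1), (1 + (X : PowerSeries ℚ) ^ (j + 1))) = Pp (2 * m + 2) := rfl
  have hPp3 : (∏ j ∈ Finset.range (2 * (m + 1)), (1 + (X : PowerSeries ℚ) ^ (j + 1))) = Pp (2 * m + 2) := by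
    rw [show 2 * (m + 1) = 2 * m + 2 by ring]; rfl
  have h1 : Ring.inverse (Pp (2 * m + 1)) * Pp (2 * m + 2) = 1 + X ^ (2 * m + 2) := by
    rw [Pp_succ (2 * m + 1), ← mul_assoc,
      Ring.inverse_mul_cancel _ (isUnit_Pp (2 * m + 1)), one_mul]
  have h2 : Ring.inverse (Pp (2 * m + 2)) * Pp (2 * m + 2) = 1 :=
    Ring.inverse_mul_cancel _ HU
  have e1 : (2 * m + 1) * (2 * m + 1 + 1) / 2 = (m + 1) * (2 * (m + 1) - 1) := by
    rw [show 2 * m + 1 + 1 = (m + 1) * 2 by ring, ← mul_assoc,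
      Nat.mul_div_cancel _ (by norm_num), show 2 * (m + 1) - 1 = 2 * m + 1 by omega]
    ring
  have e2 : (2 * m + 1 + 1) * (2 * m + 1 + 1 + 1) / 2 = (m + 1) * (2 * (m + 1) - 1) + (2 * m + 2) := by
    rw [show (2 * m + 1 + 1) * (2 * m + 1 + 1 + 1) = ((m + 1) * (2 * m + 3)) * 2 by ring,
      Nat.mul_div_cancel _ (by norm_num), show 2 * (m + 1) - 1 = 2 * m + 1 by omega]
    ring
  rw [fR1, fR1, fR2, hPp1, hPp2, hPp3]
  rw [show 2 * m + 1 - 1 = 2 * m by omega, show 2 * m + 1 + 1 - 1 = 2 * m + 1 by omega]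
  rw [Even.neg_one_pow (⟨m, by ring⟩ : Even (2 * m)), Odd.neg_one_pow ⟨m, by ring⟩]
  rw [e1, e2]
  linear_combination (X : PowerSeries ℚ) ^ ((m + 1) * (2 * (m + 1) - 1)) * h1
    - (X : PowerSeries ℚ) ^ ((m + 1) * (2 * (m + 1) - 1)) * X ^ (2 * m + 2) * h2
    - (X : PowerSeries ℚ) ^ ((m + 1) * (2 * (m + 1) - 1)) * h2

theorem stmt16' :
    seriesSum fL = seriesSum fR1 ∧ seriesSum fL = seriesSum fR2 := by
  have key1 : seriesSum fL = seriesSum fR1 := by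
    apply PowerSeries.ext
    intro N
    rw [coeff_seriesSum_eq fL N (N + 1) le_rfl (vanish_fL N),
      coeff_seriesSum_eq fR1 N (N + 1) le_rfl (vanish_fR1 N)]
    have hd : (∑ k ∈ Finset.range (N + 1), (fL k - fR1 k)) =
        ((-1) ^ (N + 1) * X ^ ((N + 2) * (N + 3) / 2) * Aq (N + 1))
          * Ring.inverse (Pp (N + 1)) := by
      apply (isUnit_Pp (N + 1)).mul_right_cancel
      rw [mul_assoc, Ring.inverse_mul_cancel _ (isUnit_Pp (N + 1)), mul_one, Ekey]
    have hzero : coeff N (∑ k ∈ Finset.range (N + 1), (fL k - fR1 k)) = 0 := by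
      refine coeff_zero_of_dvd (e := (N + 2) * (N + 3) / 2) ?_ ?_
      · exact ⟨(-1) ^ (N + 1) * Aq (N + 1) * Ring.inverse (Pp (N + 1)), by rw [hd]; ring⟩
      · have : N + 2 ≤ (N + 2) * (N + 3) / 2 := by
          rw [Nat.le_div_iff_mul_le (by norm_num)]
          exact Nat.mul_le_mul_left _ (by omega)
        omega
    rw [Finset.sum_sub_distrib, map_sub] at hzero
    linarith [hzero]
  refine ⟨key1, key1.trans ?_⟩
  apply PowerSeries.ext
  intro N
  rw [coeff_seriesSum_eq fR1 N (2 * (N + 1)) (by omega) (vanish_fR1 N),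
    coeff_seriesSum_eq fR2 N (N + 1) le_rfl (vanish_fR2 N)]
  have hpair : ∀ M : ℕ, (∑ k ∈ Finset.range (2 * M), fR1 k) = ∑ m ∈ Finset.range M, fR2 m := by
    intro M
    induction M with
    | zero => simp
    | succ M IH =>
      rw [show 2 * (M + 1) = 2 * M + 1 + 1 by ring, Finset.sum_range_succ,
        Finset.sum_range_succ, IH, Finset.sum_range_succ, add_assoc, pairKey]
  rw [hpair]

/-- Lemma 4.1. -/
theorem stmt16 :
    seriesSum (fun m =>
        (X : PowerSeries ℚ) ^ ((m + 1) * (3 * (m + 1) - 1) / 2) * (1 - X ^ (m + 1))) =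
      seriesSum (fun m =>
        (-1 : PowerSeries ℚ) ^ (m + 1 - 1) * X ^ ((m + 1) * (m + 1 + 1) / 2)
          * Ring.inverse (∏ j ∈ Finset.range (m + 1), (1 + X ^ (j + 1)))) ∧
    seriesSum (fun m =>
        (X : PowerSeries ℚ) ^ ((m + 1) * (3 * (m + 1) - 1) / 2) * (1 - X ^ (m + 1))) =
      seriesSum (fun m =>
        (X : PowerSeries ℚ) ^ ((m + 1) * (2 * (m + 1) - 1))
          * Ring.inverse (∏ j ∈ Finset.range (2 * (m + 1)), (1 + X ^ (j + 1)))) := stmt16'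
end
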